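/- arXiv:1807.02595 — 3 statements merged into one kernel-verified Lean document; each statement's English description precedes it below -/
import Mathlib

section
/- Let L be a transfer operator given by transition probabilities on a compact metric space X and μ a stationary probability measure (L*μ = μ). Let φ be bounded measurable real-valued, φ_n := Σ_{j=0}^{n-1} L^j φ, and for a real number α let C_α := {x : sup_{n≥1} φ_n(x)/n > α}. Then for any measurable set A ⊆ C_α satisfying (Lχ_A)(x) = χ_A(x) for μ-a.e. x, one has ∫_A φ dμ ≥ α · μ(A). -/
open MeasureTheory Filter

/-- The transfer operator on bounded measurable functions associated to a
family of transition probabilities `P : X → Measure X`. -/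
noncomputable def Lop {X : Type*} [MeasurableSpace X]
    (P : X → Measure X) (φ : X → ℝ) : X → ℝ :=
  fun x => ∫ y, φ y ∂(P x)

section Aux

variable {X : Type*} [MeasurableSpace X] {P : X → Measure X}

lemma aux_integrable {ν : Measure X} [IsFiniteMeasure ν] {f : X → ℝ} {C : ℝ}
    (hm : Measurable f) (hC : ∀ x, |f x| ≤ C) : Integrable f ν :=
  (integrable_const C).mono' hm.aestronglyMeasurable
    (Eventually.of_forall fun x => by simpa using hC x)

lemma aux_meas (hPprob : ∀ x, IsProbabilityMeasure (P x)) (hPmeas : Measurable P)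
    {f : X → ℝ} (hf : Measurable f) : Measurable (Lop P f) := by
  let κ : ProbabilityTheory.Kernel X X := ⟨P, hPmeas⟩
  haveI : ProbabilityTheory.IsMarkovKernel κ := ⟨fun x => hPprob x⟩
  have h := MeasureTheory.StronglyMeasurable.integral_kernel_prod_right' (κ := κ)
    (f := fun p : X × X => f p.2) (hf.comp measurable_snd).stronglyMeasurable
  exact h.measurable

lemma aux_bound (hPprob : ∀ x, IsProbabilityMeasure (P x)) {f : X → ℝ} {C : ℝ}
    (hC : ∀ x, |f x| ≤ C) : ∀ x, |Lop P f x| ≤ C := by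
  intro x
  haveI := hPprob x
  calc |Lop P f x| = ‖∫ y, f y ∂(P x)‖ := (Real.norm_eq_abs _).symm
    _ ≤ C * ((P x) Set.univ).toReal :=
        norm_integral_le_of_norm_le_const (Eventually.of_forall fun y => by simpa using hC y)
    _ = C := by simp

lemma aux_add (hPprob : ∀ x, IsProbabilityMeasure (P x)) {f g : X → ℝ} {Cf Cg : ℝ}
    (hfm : Measurable f) (hf : ∀ x, |f x| ≤ Cf) (hgm : Measurable g) (hg : ∀ x, |g x| ≤ Cg) :
    ∀ x, Lop P (fun y => f y + g y) x = Lop P f x + Lop P g x := by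
  intro x
  haveI := hPprob x
  exact integral_add (aux_integrable hfm hf) (aux_integrable hgm hg)

lemma aux_const (hPprob : ∀ x, IsProbabilityMeasure (P x)) (c : ℝ) :
    ∀ x, Lop P (fun _ => c) x = c := by
  intro x
  haveI := hPprob x
  simp [Lop]

lemma aux_sum (hPprob : ∀ x, IsProbabilityMeasure (P x)) {ι : Type*} (s : Finset ι)
    {f : ι → X → ℝ} {C : ι → ℝ} (hfm : ∀ i, Measurable (f i)) (hf : ∀ i x, |f i x| ≤ C i) :
    ∀ x, Lop P (fun y => ∑ i ∈ s, f i y) x = ∑ i ∈ s, Lop P (f i) x := by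
  intro x
  haveI := hPprob x
  exact integral_finset_sum s (fun i _ => aux_integrable (hfm i) (hf i))

lemma aux_mono (hPprob : ∀ x, IsProbabilityMeasure (P x)) {f g : X → ℝ} {Cf Cg : ℝ}
    (hfm : Measurable f) (hf : ∀ x, |f x| ≤ Cf) (hgm : Measurable g) (hg : ∀ x, |g x| ≤ Cg)
    (h : ∀ x, f x ≤ g x) : ∀ x, Lop P f x ≤ Lop P g x := by
  intro x
  haveI := hPprob x
  exact integral_mono (aux_integrable hfm hf) (aux_integrable hgm hg) h

lemma aux_nonneg {f : X → ℝ} (h : ∀ x, 0 ≤ f x) : ∀ x, 0 ≤ Lop P f x :=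
  fun _ => integral_nonneg h

lemma aux_null (hPmeas : Measurable P) {μ : Measure X} (hstat : μ.bind P = μ)
    {N : Set X} (hN : μ N = 0) : ∀ᵐ x ∂μ, P x N = 0 := by
  set N' := toMeasurable μ N with hN'def
  have hN' : MeasurableSet N' := measurableSet_toMeasurable μ N
  have hμN' : μ N' = 0 := by rw [hN'def, measure_toMeasurable]; exact hN
  have hb : ∫⁻ x, P x N' ∂μ = 0 := by
    rw [← Measure.bind_apply hN' hPmeas.aemeasurable, hstat, hμN']
  have hmeas : Measurable fun x => P x N' := (Measure.measurable_coe hN').comp hPmeas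
  have h0 := (lintegral_eq_zero_iff hmeas).mp hb
  filter_upwards [h0] with x hx
  exact measure_mono_null (subset_toMeasurable μ N) hx

lemma aux_congr (hPmeas : Measurable P) {μ : Measure X} (hstat : μ.bind P = μ)
    {f g : X → ℝ} (hfg : f =ᵐ[μ] g) : Lop P f =ᵐ[μ] Lop P g := by
  have hN : μ {x | ¬ f x = g x} = 0 := hfg
  have h := aux_null hPmeas hstat hN
  filter_upwards [h] with x hx
  refine integral_congr_ae ?_
  exact hx

lemma aux_ind (hPprob : ∀ x, IsProbabilityMeasure (P x)) {μ : Measure X}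
    {A : Set X} (hAm : MeasurableSet A)
    (hAinv : Lop P (A.indicator fun _ => (1 : ℝ)) =ᵐ[μ] A.indicator fun _ => (1 : ℝ))
    (f : X → ℝ) :
    Lop P (A.indicator f) =ᵐ[μ] A.indicator (Lop P f) := by
  filter_upwards [hAinv] with x hx
  haveI := hPprob x
  have hPA : (P x A).toReal = A.indicator (fun _ => (1 : ℝ)) x := by
    rw [← hx]
    show (P x A).toReal = ∫ y, A.indicator (fun _ => (1:ℝ)) y ∂(P x)
    rw [integral_indicator_const (1 : ℝ) hAm]
    simp [measureReal_def]
  by_cases hxA : x ∈ A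
  · have h1 : P x A = 1 := by
      have ht : (P x A).toReal = 1 := by rw [hPA, Set.indicator_of_mem hxA]
      have hne : P x A ≠ ⊤ := measure_ne_top _ _
      calc P x A = ENNReal.ofReal ((P x A).toReal) := (ENNReal.ofReal_toReal hne).symm
        _ = 1 := by rw [ht]; simp
    have hAc : P x Aᶜ = 0 := by
      have hc := measure_compl hAm (measure_ne_top (P x) A)
      rw [measure_univ, h1] at hc
      simpa using hc
    have heq : A.indicator f =ᵐ[P x] f := by
      refine measure_mono_null (fun y hy => ?_) hAc
      by_contra hyA
      exact hy (Set.indicator_of_mem (Set.notMem_compl_iff.mp hyA) f)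
    show ∫ y, A.indicator f y ∂(P x) = A.indicator (Lop P f) x
    rw [integral_congr_ae heq, Set.indicator_of_mem hxA]
    rfl
  · have h0 : P x A = 0 := by
      have ht : (P x A).toReal = 0 := by rw [hPA, Set.indicator_of_notMem hxA]
      exact ((ENNReal.toReal_eq_zero_iff _).mp ht).resolve_right (measure_ne_top _ _)
    have heq : A.indicator f =ᵐ[P x] (fun _ => (0:ℝ)) := by
      refine measure_mono_null (fun y hy => ?_) h0
      by_contra hyA
      exact hy (Set.indicator_of_notMem hyA f)
    show ∫ y, A.indicator f y ∂(P x) = A.indicator (Lop P f) x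
    rw [integral_congr_ae heq, Set.indicator_of_notMem hxA]
    simp

lemma aux_int (hPprob : ∀ x, IsProbabilityMeasure (P x)) (hPmeas : Measurable P)
    {μ : Measure X} [IsProbabilityMeasure μ] (hstat : μ.bind P = μ)
    {f : X → ℝ} {C : ℝ} (hf : Measurable f) (hC : ∀ x, |f x| ≤ C) :
    ∫ x, Lop P f x ∂μ = ∫ x, f x ∂μ := by
  set D := max C 0 with hDdef
  have hD0 : 0 ≤ D := le_max_right _ _
  have hCD : ∀ x, |f x| ≤ D := fun x => (hC x).trans (le_max_left _ _)
  set g : X → ℝ := fun x => f x + D with hgdef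
  have hg0 : ∀ x, 0 ≤ g x := fun x => by
    have := (abs_le.mp (hCD x)).1; simp only [hgdef]; linarith
  have hgB : ∀ x, g x ≤ D + D := fun x => by
    have := (abs_le.mp (hCD x)).2; simp only [hgdef]; linarith
  have hgm : Measurable g := hf.add measurable_const
  have hgabs : ∀ x, |g x| ≤ D + D := fun x => abs_le.mpr ⟨by linarith [hg0 x, hD0], hgB x⟩
  have h1 : ∀ (ν : Measure X) [IsProbabilityMeasure ν],
      ∫ y, g y ∂ν = (∫⁻ y, ENNReal.ofReal (g y) ∂ν).toReal := fun ν _ =>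
    integral_eq_lintegral_of_nonneg_ae (Eventually.of_forall hg0) hgm.aestronglyMeasurable
  have hmeas_lin : Measurable fun x => ∫⁻ y, ENNReal.ofReal (g y) ∂(P x) := by
    let κ : ProbabilityTheory.Kernel X X := ⟨P, hPmeas⟩
    haveI : ProbabilityTheory.IsMarkovKernel κ := ⟨fun x => hPprob x⟩
    exact Measurable.lintegral_kernel (κ := κ) (ENNReal.measurable_ofReal.comp hgm)
  have hfin : ∀ x, ∫⁻ y, ENNReal.ofReal (g y) ∂(P x) ≤ ENNReal.ofReal (D + D) := by
    intro x
    haveI := hPprob x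
    calc ∫⁻ y, ENNReal.ofReal (g y) ∂(P x)
        ≤ ∫⁻ _, ENNReal.ofReal (D + D) ∂(P x) :=
          lintegral_mono fun y => ENNReal.ofReal_le_ofReal (hgB y)
      _ = ENNReal.ofReal (D + D) := by simp
  have key : ∫ x, Lop P g x ∂μ = ∫ x, g x ∂μ := by
    calc ∫ x, Lop P g x ∂μ
        = ∫ x, (∫⁻ y, ENNReal.ofReal (g y) ∂(P x)).toReal ∂μ := by
          refine integral_congr_ae (Eventually.of_forall fun x => ?_)
          haveI := hPprob x
          exact h1 (P x)
      _ = (∫⁻ x, ∫⁻ y, ENNReal.ofReal (g y) ∂(P x) ∂μ).toReal := by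
          rw [integral_toReal hmeas_lin.aemeasurable
            (Eventually.of_forall fun x => lt_of_le_of_lt (hfin x) ENNReal.ofReal_lt_top)]
      _ = (∫⁻ y, ENNReal.ofReal (g y) ∂(μ.bind P)).toReal := by
          rw [Measure.lintegral_bind hPmeas.aemeasurable (hgm.ennreal_ofReal.aemeasurable)]
      _ = ∫ y, g y ∂μ := by rw [hstat]; exact (h1 μ).symm
  have hLg : ∀ x, Lop P g x = Lop P f x + D := by
    intro x
    haveI := hPprob x
    show ∫ y, (f y + D) ∂(P x) = (∫ y, f y ∂(P x)) + D
    rw [integral_add (aux_integrable hf hCD) (integrable_const D)]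
    simp
  have hLfm : Measurable (Lop P f) := aux_meas hPprob hPmeas hf
  have hLfb : ∀ x, |Lop P f x| ≤ D := aux_bound hPprob hCD
  have e1 : ∫ x, Lop P g x ∂μ = (∫ x, Lop P f x ∂μ) + D := by
    rw [integral_congr_ae (Eventually.of_forall hLg),
      integral_add (aux_integrable hLfm hLfb) (integrable_const D)]
    simp
  have e2 : ∫ x, g x ∂μ = (∫ x, f x ∂μ) + D := by
    simp only [hgdef]
    rw [integral_add (aux_integrable hf hCD) (integrable_const D)]
    simp
  rw [e1, e2] at key
  linarith

end Aux


/-- Running maximum of the partial sums, used in the Hopf maximal ergodic argument. -/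
noncomputable def maxS {X : Type*} (S : ℕ → X → ℝ) : ℕ → X → ℝ
  | 0 => S 0
  | n + 1 => fun x => max (maxS S n x) (S (n + 1) x)

theorem stmt_6 {X : Type*} [MetricSpace X] [CompactSpace X]
    [MeasurableSpace X] [BorelSpace X]
    (P : X → Measure X) (hPprob : ∀ x, IsProbabilityMeasure (P x))
    (hPmeas : Measurable P)
    (μ : Measure X) [IsProbabilityMeasure μ] (hstat : μ.bind P = μ)
    (φ : X → ℝ) (hφm : Measurable φ) (hφb : ∃ C, ∀ x, |φ x| ≤ C)
    (α : ℝ) (A : Set X) (hAm : MeasurableSet A)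
    (hAsub : A ⊆ {x | ∃ n : ℕ,
      α < (∑ j ∈ Finset.range (n + 1), (Lop P)^[j] φ x) / (n + 1 : ℝ)})
    (hAinv : Lop P (A.indicator fun _ => (1 : ℝ)) =ᵐ[μ] A.indicator fun _ => (1 : ℝ)) :
    α * (μ A).toReal ≤ ∫ x in A, φ x ∂μ := by
  classical
  obtain ⟨C₀, hC₀⟩ := hφb
  set Cφ : ℝ := max C₀ 0 with hCφdef
  have hCφ : ∀ x, |φ x| ≤ Cφ := fun x => (hC₀ x).trans (le_max_left _ _)
  have hCφ0 : 0 ≤ Cφ := le_max_right _ _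
  set Cψ : ℝ := Cφ + |α| with hCψdef
  have hCψ0 : 0 ≤ Cψ := by positivity
  set ψ : X → ℝ := A.indicator (fun x => φ x - α) with hψdef
  have hψm : Measurable ψ := (hφm.sub measurable_const).indicator hAm
  have hψb : ∀ x, |ψ x| ≤ Cψ := by
    intro x
    by_cases hx : x ∈ A
    · rw [hψdef, Set.indicator_of_mem hx]
      calc |φ x - α| ≤ |φ x| + |α| := abs_sub _ _
        _ ≤ Cψ := by have := hCφ x; rw [hCψdef]; linarith
    · rw [hψdef, Set.indicator_of_notMem hx]; simpa using hCψ0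
  -- iterates of Lop are measurable and bounded
  have hiter : ∀ (f : X → ℝ) (Cf : ℝ), Measurable f → (∀ x, |f x| ≤ Cf) →
      ∀ j, Measurable ((Lop P)^[j] f) ∧ ∀ x, |(Lop P)^[j] f x| ≤ Cf := by
    intro f Cf hm hb j
    induction j with
    | zero => exact ⟨hm, hb⟩
    | succ j ih =>
      rw [Function.iterate_succ_apply']
      exact ⟨aux_meas hPprob hPmeas ih.1, aux_bound hPprob ih.2⟩
  set S : ℕ → X → ℝ := fun n x => ∑ j ∈ Finset.range n, (Lop P)^[j] ψ x with hSdef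
  have hSm : ∀ n, Measurable (S n) := fun n =>
    Finset.measurable_sum _ (fun j _ => (hiter ψ Cψ hψm hψb j).1)
  have hSb : ∀ n, ∀ x, |S n x| ≤ n * Cψ := by
    intro n x
    calc |S n x| ≤ ∑ j ∈ Finset.range n, |(Lop P)^[j] ψ x| := Finset.abs_sum_le_sum_abs _ _
      _ ≤ ∑ _j ∈ Finset.range n, Cψ :=
          Finset.sum_le_sum fun j _ => (hiter ψ Cψ hψm hψb j).2 x
      _ = n * Cψ := by simp [Finset.sum_const, nsmul_eq_mul]
  have hS0 : ∀ x, S 0 x = 0 := fun x => by simp [hSdef]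
  have hSrec : ∀ n x, S (n + 1) x = ψ x + Lop P (S n) x := by
    intro n x
    have h1 : Lop P (S n) x = ∑ j ∈ Finset.range n, Lop P ((Lop P)^[j] ψ) x :=
      aux_sum hPprob (Finset.range n) (C := fun _ => Cψ)
        (fun j => (hiter ψ Cψ hψm hψb j).1) (fun j x => (hiter ψ Cψ hψm hψb j).2 x) x
    have h2 : S (n + 1) x = ∑ j ∈ Finset.range n, (Lop P)^[j + 1] ψ x + (Lop P)^[0] ψ x :=
      Finset.sum_range_succ' _ n
    rw [h2, h1]
    simp only [Function.iterate_succ_apply', Function.iterate_zero_apply]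
    ring
  set M : ℕ → X → ℝ := maxS S with hMdef
  have hMsucc : ∀ n x, M (n + 1) x = max (M n x) (S (n + 1) x) := fun _ _ => rfl
  have hM0 : ∀ x, M 0 x = 0 := fun x => hS0 x
  have hMm : ∀ n, Measurable (M n) := by
    intro n
    induction n with
    | zero => exact hSm 0
    | succ n ih => exact ih.max (hSm (n + 1))
  have hMb : ∀ n, ∃ B, ∀ x, |M n x| ≤ B := by
    intro n
    induction n with
    | zero => exact ⟨0, fun x => by rw [hM0 x]; simp⟩
    | succ n ih =>
      obtain ⟨B, hB⟩ := ih
      refine ⟨B + (n + 1) * Cψ, fun x => ?_⟩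
      rw [hMsucc]
      rcases le_total (M n x) (S (n + 1) x) with h | h
      · rw [max_eq_right h]
        have := hSb (n + 1) x
        have hB0 : 0 ≤ B := le_trans (abs_nonneg _) (hB x)
        push_cast at this ⊢
        linarith
      · rw [max_eq_left h]
        have h2 : (0:ℝ) ≤ (n + 1) * Cψ := by positivity
        push_cast at h2 ⊢
        linarith [hB x]
  have hMmono : ∀ {a b : ℕ}, a ≤ b → ∀ x, M a x ≤ M b x := by
    intro a b hab x
    exact (monotone_nat_of_le_succ (fun n => le_max_left (M n x) (S (n + 1) x))
      : Monotone fun n => M n x) hab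
  have hSleM : ∀ n N, n ≤ N → ∀ x, S n x ≤ M N x := by
    intro n N hnN x
    induction N with
    | zero =>
      interval_cases n
      rw [hM0, hS0]
    | succ N ih =>
      rcases Nat.lt_or_ge n (N + 1) with h | h
      · exact (ih (Nat.lt_succ_iff.mp h)).trans (hMmono (Nat.le_succ N) x)
      · have : n = N + 1 := le_antisymm hnN h
        subst this
        rw [hMsucc]
        exact le_max_right _ _
  have hM0le : ∀ N x, 0 ≤ M N x := by
    intro N x
    have := hSleM 0 N (Nat.zero_le _) x
    rwa [hS0] at this
  have hMattain : ∀ N x, 0 < M N x → ∃ n, 1 ≤ n ∧ n ≤ N ∧ M N x = S n x := by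
    intro N
    induction N with
    | zero => intro x hx; rw [hM0] at hx; exact absurd hx (lt_irrefl 0)
    | succ N ih =>
      intro x hx
      rcases le_total (S (N + 1) x) (M N x) with h | h
      · rw [hMsucc, max_eq_left h] at hx ⊢
        obtain ⟨n, h1, h2, h3⟩ := ih x hx
        exact ⟨n, h1, h2.trans (Nat.le_succ N), h3⟩
      · exact ⟨N + 1, Nat.succ_le_succ (Nat.zero_le N), le_refl _,
          by rw [hMsucc, max_eq_right h]⟩
  have hkey : ∀ N x, 0 < M N x → M N x ≤ ψ x + Lop P (M N) x := by
    intro N x hx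
    obtain ⟨n, hn1, hnN, heq⟩ := hMattain N x hx
    obtain ⟨m, rfl⟩ : ∃ m, n = m + 1 := ⟨n - 1, (Nat.succ_pred_eq_of_pos hn1).symm⟩
    obtain ⟨B, hB⟩ := hMb N
    have hmono : Lop P (S m) x ≤ Lop P (M N) x :=
      aux_mono hPprob (hSm m) (hSb m) (hMm N) hB
        (hSleM m N (Nat.le_of_succ_le hnN)) x
    rw [heq, hSrec m x]
    linarith
  set E : ℕ → Set X := fun N => {x | 0 < M N x} with hEdef
  have hEm : ∀ N, MeasurableSet (E N) := fun N =>
    measurableSet_lt measurable_const (hMm N)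
  have hEmono : Monotone E := fun a b hab x hx => lt_of_lt_of_le hx (hMmono hab x)
  have hψint : Integrable ψ μ := aux_integrable hψm hψb
  have hposN : ∀ N, 0 ≤ ∫ x in E N, ψ x ∂μ := by
    intro N
    obtain ⟨B, hB⟩ := hMb N
    have hMint : Integrable (M N) μ := aux_integrable (hMm N) hB
    have hLMm : Measurable (Lop P (M N)) := aux_meas hPprob hPmeas (hMm N)
    have hLMb : ∀ x, |Lop P (M N) x| ≤ B := aux_bound hPprob hB
    have hLMint : Integrable (Lop P (M N)) μ := aux_integrable hLMm hLMb
    have step1 : ∫ x in E N, (M N x - Lop P (M N) x) ∂μ ≤ ∫ x in E N, ψ x ∂μ := by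
      refine setIntegral_mono_on (hMint.sub hLMint).integrableOn hψint.integrableOn
        (hEm N) (fun x hx => ?_)
      have := hkey N x hx
      linarith
    have step2 : ∫ x in E N, (M N x - Lop P (M N) x) ∂μ
        = (∫ x in E N, M N x ∂μ) - ∫ x in E N, Lop P (M N) x ∂μ :=
      integral_sub hMint.integrableOn hLMint.integrableOn
    have step3 : ∫ x in E N, M N x ∂μ = ∫ x, M N x ∂μ := by
      have hz : ∫ x in (E N)ᶜ, M N x ∂μ = 0 := by
        rw [setIntegral_congr_fun (hEm N).compl
          (g := fun _ => (0:ℝ)) (fun x hx => le_antisymm (not_lt.mp hx) (hM0le N x))]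
        simp
      rw [← integral_add_compl (hEm N) hMint, hz, add_zero]
    have step4 : ∫ x in E N, Lop P (M N) x ∂μ ≤ ∫ x, Lop P (M N) x ∂μ :=
      setIntegral_le_integral hLMint (Eventually.of_forall (aux_nonneg (hM0le N)))
    have step5 : ∫ x, Lop P (M N) x ∂μ = ∫ x, M N x ∂μ :=
      aux_int hPprob hPmeas hstat (hMm N) hB
    linarith
  have htend : Tendsto (fun N => ∫ x in E N, ψ x ∂μ) atTop
      (nhds (∫ x in ⋃ N, E N, ψ x ∂μ)) :=
    tendsto_setIntegral_of_monotone hEm hEmono hψint.integrableOn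
  have hEU : 0 ≤ ∫ x in ⋃ N, E N, ψ x ∂μ := ge_of_tendsto' htend hposN
  -- identify the union with A up to null sets
  set T : ℕ → X → ℝ := fun n x => (∑ j ∈ Finset.range n, (Lop P)^[j] φ x) - n * α with hTdef
  have hTm : ∀ n, Measurable (T n) := fun n =>
    (Finset.measurable_sum _ (fun j _ => (hiter φ Cφ hφm hCφ j).1)).sub measurable_const
  have hTb : ∀ n x, |T n x| ≤ n * Cφ + n * |α| := by
    intro n x
    have h1 : |∑ j ∈ Finset.range n, (Lop P)^[j] φ x| ≤ n * Cφ := by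
      calc |∑ j ∈ Finset.range n, (Lop P)^[j] φ x|
          ≤ ∑ j ∈ Finset.range n, |(Lop P)^[j] φ x| := Finset.abs_sum_le_sum_abs _ _
        _ ≤ ∑ _j ∈ Finset.range n, Cφ :=
            Finset.sum_le_sum fun j _ => (hiter φ Cφ hφm hCφ j).2 x
        _ = n * Cφ := by simp [Finset.sum_const, nsmul_eq_mul]
    calc |T n x| ≤ |∑ j ∈ Finset.range n, (Lop P)^[j] φ x| + |(n : ℝ) * α| := abs_sub _ _
      _ ≤ n * Cφ + n * |α| := by
          rw [abs_mul, Nat.abs_cast]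
          linarith
  have hLopT : ∀ n x, Lop P (T n) x
      = (∑ j ∈ Finset.range n, (Lop P)^[j + 1] φ x) - n * α := by
    intro n x
    have hsplit : T n = fun y => (∑ j ∈ Finset.range n, (Lop P)^[j] φ y)
        + (fun _ : X => -((n : ℝ) * α)) y := by
      funext y
      simp [hTdef, sub_eq_add_neg]
    rw [hsplit]
    rw [aux_add hPprob (Cf := n * Cφ) (Cg := |(n : ℝ) * α|)
      (Finset.measurable_sum _ (fun j _ => (hiter φ Cφ hφm hCφ j).1))
      (fun y => by
        calc |∑ j ∈ Finset.range n, (Lop P)^[j] φ y|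
            ≤ ∑ j ∈ Finset.range n, |(Lop P)^[j] φ y| := Finset.abs_sum_le_sum_abs _ _
          _ ≤ ∑ _j ∈ Finset.range n, Cφ :=
              Finset.sum_le_sum fun j _ => (hiter φ Cφ hφm hCφ j).2 y
          _ = n * Cφ := by simp [Finset.sum_const, nsmul_eq_mul])
      measurable_const (fun y => by rw [abs_neg]) x]
    rw [aux_sum hPprob (Finset.range n) (C := fun _ => Cφ)
      (fun j => (hiter φ Cφ hφm hCφ j).1) (fun j y => (hiter φ Cφ hφm hCφ j).2 y) x,
      aux_const hPprob _ x]
    simp only [Function.iterate_succ_apply']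
    ring
  have hST : ∀ n, S n =ᵐ[μ] A.indicator (T n) := by
    intro n
    induction n with
    | zero =>
      refine Eventually.of_forall fun x => ?_
      rw [hS0]
      have : T 0 x = 0 := by simp [hTdef]
      rw [show A.indicator (T 0) x = 0 by
        by_cases hx : x ∈ A
        · rw [Set.indicator_of_mem hx, this]
        · rw [Set.indicator_of_notMem hx]]
    | succ n ih =>
      have e2 : Lop P (S n) =ᵐ[μ] Lop P (A.indicator (T n)) := aux_congr hPmeas hstat ih
      have e3 : Lop P (A.indicator (T n)) =ᵐ[μ] A.indicator (Lop P (T n)) :=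
        aux_ind hPprob hAm hAinv (T n)
      filter_upwards [e2, e3] with x h2 h3
      rw [hSrec n x, h2, h3]
      by_cases hx : x ∈ A
      · rw [hψdef, Set.indicator_of_mem hx, Set.indicator_of_mem hx,
          Set.indicator_of_mem hx, hLopT n x]
        have hsum : T (n + 1) x
            = ∑ j ∈ Finset.range n, (Lop P)^[j + 1] φ x + (Lop P)^[0] φ x
              - (n + 1 : ℕ) * α := by
          rw [hTdef]
          simp only
          rw [Finset.sum_range_succ' _ n]
        rw [hsum]
        simp only [Function.iterate_zero_apply]
        push_cast
        ring
      · rw [hψdef, Set.indicator_of_notMem hx, Set.indicator_of_notMem hx,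
          Set.indicator_of_notMem hx]
        ring
  have halleq : ∀ᵐ x ∂μ, ∀ n, S n x = A.indicator (T n) x := by
    rw [ae_all_iff]
    exact fun n => hST n
  have hEA : (⋃ N, E N) =ᵐ[μ] A := by
    have h : ∀ᵐ x ∂μ, (x ∈ ⋃ N, E N) ↔ x ∈ A := by
      filter_upwards [halleq] with x hx
      constructor
      · intro hmem
        obtain ⟨N, hN⟩ := Set.mem_iUnion.mp hmem
        have hNpos : 0 < M N x := hN
        obtain ⟨n, _, _, heq⟩ := hMattain N x hNpos
        have hSpos : 0 < S n x := heq ▸ hNpos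
        rw [hx n] at hSpos
        by_contra hxA
        rw [Set.indicator_of_notMem hxA] at hSpos
        exact lt_irrefl 0 hSpos
      · intro hxA
        obtain ⟨n, hn⟩ := hAsub hxA
        have hnp : (0:ℝ) < (n : ℝ) + 1 := by positivity
        rw [lt_div_iff₀ hnp] at hn
        have hpos : 0 < T (n + 1) x := by
          rw [hTdef]
          simp only
          push_cast
          nlinarith [hn]
        have hSpos : 0 < S (n + 1) x := by
          rw [hx (n + 1), Set.indicator_of_mem hxA]
          exact hpos
        exact Set.mem_iUnion.mpr ⟨n + 1,
          lt_of_lt_of_le hSpos (hSleM (n + 1) (n + 1) le_rfl x)⟩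
    exact Filter.eventuallyEq_set.mpr h
  have h1 : ∫ x in ⋃ N, E N, ψ x ∂μ = ∫ x in A, ψ x ∂μ := setIntegral_congr_set hEA
  have h2 : ∫ x in A, ψ x ∂μ = ∫ x in A, (φ x - α) ∂μ :=
    setIntegral_congr_fun hAm (fun x hx => Set.indicator_of_mem hx _)
  have h3 : ∫ x in A, (φ x - α) ∂μ = (∫ x in A, φ x ∂μ) - (μ A).toReal * α := by
    rw [integral_sub (aux_integrable hφm hCφ).integrableOn
      ((integrable_const α).integrableOn), setIntegral_const]
    simp [smul_eq_mul, measureReal_def]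
  rw [h1, h2, h3] at hEU
  linarith
end

section
/- Let L be a transfer operator given by transition probabilities on a compact metric space X and μ a probability measure with L*μ = μ. If φ is a bounded measurable real function with Lφ = φ μ-a.e., then for all real α, β the sets C_α = {x : φ(x) > α} and B_β = {x : φ(x) < β} are μ-a.e. L-invariant, i.e. Lχ_{C_α} = χ_{C_α} and Lχ_{B_β} = χ_{B_β} μ-a.e. -/
open MeasureTheory Filter ProbabilityTheory
open scoped ENNReal

section Aux

variable {X : Type*} [MeasurableSpace X]

lemma bdd_integrable {f : X → ℝ} (hm : Measurable f) {C : ℝ} (hC : ∀ x, |f x| ≤ C)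
    (ν : Measure X) [IsFiniteMeasure ν] : Integrable f ν :=
  ⟨hm.aestronglyMeasurable,
    HasFiniteIntegral.of_bounded (C := C)
      (ae_of_all _ fun x => by simpa [Real.norm_eq_abs] using hC x)⟩

lemma Lop_bound (P : X → Measure X) (hPprob : ∀ x, IsProbabilityMeasure (P x))
    {f : X → ℝ} {C : ℝ} (hC : ∀ x, |f x| ≤ C) (x : X) : |Lop P f x| ≤ C := by
  haveI := hPprob x
  have : ‖∫ y, f y ∂(P x)‖ ≤ C * ((P x) Set.univ).toReal :=
    norm_integral_le_of_norm_le_const (ae_of_all _ fun y => by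
      simpa [Real.norm_eq_abs] using hC y)
  simpa [Lop, Real.norm_eq_abs, measure_univ] using this

lemma Lop_meas (P : X → Measure X) (hPprob : ∀ x, IsProbabilityMeasure (P x))
    (hPmeas : Measurable P) {f : X → ℝ} (hm : Measurable f) :
    StronglyMeasurable (Lop P f) := by
  let κ : Kernel X X := ⟨P, hPmeas⟩
  haveI : IsMarkovKernel κ := ⟨fun x => hPprob x⟩
  have h : StronglyMeasurable (fun p : X × X => f p.2) :=
    (hm.comp measurable_snd).stronglyMeasurable
  exact h.integral_kernel_prod_right' (κ := κ)

lemma stat_int (P : X → Measure X) (hPprob : ∀ x, IsProbabilityMeasure (P x))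
    (hPmeas : Measurable P) (μ : Measure X) [IsProbabilityMeasure μ]
    (hstat : μ.bind P = μ) {f : X → ℝ} (hm : Measurable f) {C : ℝ}
    (hC : ∀ x, |f x| ≤ C) : ∫ x, Lop P f x ∂μ = ∫ x, f x ∂μ := by
  let κ : Kernel X X := ⟨P, hPmeas⟩
  haveI : IsMarkovKernel κ := ⟨fun x => hPprob x⟩
  have hbind : μ.bind P = (μ ⊗ₘ κ).snd := by
    ext s hs
    rw [Measure.bind_apply hs hPmeas.aemeasurable, Measure.snd_apply hs,
      Measure.compProd_apply (measurable_snd hs)]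
    rfl
  have hint : Integrable (fun p : X × X => f p.2) (μ ⊗ₘ κ) :=
    bdd_integrable (hm.comp measurable_snd) (fun p => hC p.2) _
  have h1 : ∫ x, f x ∂μ = ∫ x, ∫ y, f y ∂(κ x) ∂μ := by
    conv_lhs => rw [← hstat, hbind]
    rw [Measure.snd, integral_map measurable_snd.aemeasurable hm.aestronglyMeasurable]
    exact Measure.integral_compProd hint
  rw [h1]
  rfl

lemma keyA (P : X → Measure X) (hPprob : ∀ x, IsProbabilityMeasure (P x))
    (hPmeas : Measurable P) (μ : Measure X) [IsProbabilityMeasure μ]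
    (hstat : μ.bind P = μ) (φ : X → ℝ) (hφm : Measurable φ) {C : ℝ}
    (hC : ∀ x, |φ x| ≤ C) (hφinv : Lop P φ =ᵐ[μ] φ) (t : ℝ) :
    ∀ᵐ x ∂μ, t ≤ φ x → (P x) {y | φ y < t} = 0 := by
  set ψ : X → ℝ := fun x => max (φ x) t with hψ
  have hψm : Measurable ψ := hφm.max measurable_const
  have hψb : ∀ x, |ψ x| ≤ max C |t| := by
    intro x
    rw [abs_le]
    constructor
    · calc -(max C |t|) ≤ -C := neg_le_neg (le_max_left _ _)
        _ ≤ φ x := (abs_le.1 (hC x)).1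
        _ ≤ ψ x := le_max_left _ _
    · exact max_le_max (le_trans (le_abs_self _) (hC x)) (le_abs_self t)
  have hφi : ∀ x, Integrable φ (P x) := fun x =>
    haveI := hPprob x; bdd_integrable hφm hC _
  have hψi : ∀ x, Integrable ψ (P x) := fun x =>
    haveI := hPprob x; bdd_integrable hψm hψb _
  have hLψm := Lop_meas P hPprob hPmeas hψm
  have hLψb := Lop_bound P hPprob hψb
  have hmono : ∀ᵐ x ∂μ, ψ x ≤ Lop P ψ x := by
    filter_upwards [hφinv] with x hx
    haveI := hPprob x
    have h1 : Lop P φ x ≤ Lop P ψ x :=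
      integral_mono (hφi x) (hψi x) fun y => le_max_left _ _
    have h2 : t ≤ Lop P ψ x := by
      have : ∫ _, t ∂(P x) ≤ ∫ y, ψ y ∂(P x) :=
        integral_mono (integrable_const t) (hψi x) fun y => le_max_right _ _
      simpa [Lop, integral_const, measure_univ] using this
    exact max_le (hx ▸ h1) h2
  have hLψi : Integrable (Lop P ψ) μ := bdd_integrable hLψm.measurable hLψb μ
  have hψiμ : Integrable ψ μ := bdd_integrable hψm hψb μ
  have hint : ∫ x, (Lop P ψ x - ψ x) ∂μ = 0 := by
    rw [integral_sub hLψi hψiμ, stat_int P hPprob hPmeas μ hstat hψm hψb, sub_self]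
  have hae : (fun x => Lop P ψ x - ψ x) =ᵐ[μ] 0 :=
    (integral_eq_zero_iff_of_nonneg_ae (hmono.mono fun x hx => sub_nonneg.2 hx)
      (hLψi.sub hψiμ)).1 hint
  filter_upwards [hae, hφinv] with x hx1 hx2 hxt
  haveI := hPprob x
  have hx1' : Lop P ψ x = ψ x := by
    have : Lop P ψ x - ψ x = 0 := hx1
    linarith
  have hψx : ψ x = φ x := max_eq_left hxt
  have h0 : ∫ y, (ψ y - φ y) ∂(P x) = 0 := by
    rw [integral_sub (hψi x) (hφi x)]
    show Lop P ψ x - Lop P φ x = 0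
    rw [hx1', hx2, hψx, sub_self]
  have h5 : (fun y => ψ y - φ y) =ᵐ[P x] 0 :=
    (integral_eq_zero_iff_of_nonneg (fun y => sub_nonneg.2 (le_max_left _ _))
      ((hψi x).sub (hφi x))).1 h0
  refine measure_mono_null ?_ (ae_iff.1 h5)
  intro y hy
  simp only [Set.mem_setOf_eq] at hy ⊢
  have hψy : ψ y = t := max_eq_right hy.le
  intro h
  have : ψ y - φ y = 0 := h
  rw [hψy] at this
  linarith

lemma mainA (P : X → Measure X) (hPprob : ∀ x, IsProbabilityMeasure (P x))
    (hPmeas : Measurable P) (μ : Measure X) [IsProbabilityMeasure μ]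
    (hstat : μ.bind P = μ) (φ : X → ℝ) (hφm : Measurable φ) {C : ℝ}
    (hC : ∀ x, |φ x| ≤ C) (hφinv : Lop P φ =ᵐ[μ] φ) (α : ℝ) :
    Lop P ({x | α < φ x}.indicator fun _ => (1 : ℝ))
      =ᵐ[μ] {x | α < φ x}.indicator fun _ => (1 : ℝ) := by
  have hnegm : Measurable fun x => -φ x := hφm.neg
  have hnegb : ∀ x, |-φ x| ≤ C := fun x => by simpa [abs_neg] using hC x
  have hLneg : Lop P (fun x => -φ x) = fun x => -Lop P φ x :=
    funext fun x => integral_neg _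
  have hneginv : Lop P (fun x => -φ x) =ᵐ[μ] fun x => -φ x := by
    rw [hLneg]
    filter_upwards [hφinv] with x hx
    simp [hx]
  have keyB : ∀ᵐ x ∂μ, φ x ≤ α → (P x) {y | α < φ y} = 0 := by
    filter_upwards [keyA P hPprob hPmeas μ hstat _ hnegm hnegb hneginv (-α)] with x hx hxa
    have h := hx (neg_le_neg hxa)
    have hset : {y : X | -φ y < -α} = {y | α < φ y} := by
      ext y; simp
    rwa [hset] at h
  have keyQ : ∀ᵐ x ∂μ, ∀ q : ℚ, (q : ℝ) ≤ φ x → (P x) {y | φ y < (q : ℝ)} = 0 :=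
    ae_all_iff.2 fun q => keyA P hPprob hPmeas μ hstat φ hφm hC hφinv q
  have hA : MeasurableSet {x : X | α < φ x} := measurableSet_lt measurable_const hφm
  filter_upwards [keyB, keyQ] with x hB hQ
  haveI := hPprob x
  have hLx : Lop P ({x | α < φ x}.indicator fun _ => (1 : ℝ)) x
      = ((P x) {y | α < φ y}).toReal := by
    show ∫ y, ({x | α < φ x}.indicator fun _ => (1 : ℝ)) y ∂(P x) = _
    rw [integral_indicator_const _ hA]
    simp
    rfl
  by_cases hx : α < φ x
  · obtain ⟨q, hq1, hq2⟩ := exists_rat_btwn hx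
    have h0 := hQ q hq2.le
    have h1 : (P x) {y | α < φ y} = 1 := by
      refine le_antisymm prob_le_one ?_
      have hc : (P x) {y | φ y < (q : ℝ)}ᶜ = 1 := by
        rw [measure_compl (measurableSet_lt hφm measurable_const) (measure_ne_top _ _),
          h0, measure_univ, tsub_zero]
      calc (1 : ℝ≥0∞) = (P x) {y | φ y < (q : ℝ)}ᶜ := hc.symm
        _ ≤ (P x) {y | α < φ y} :=
          measure_mono fun y hy => lt_of_lt_of_le hq1 (not_lt.1 hy)
    rw [hLx, h1]
    simp [Set.indicator_of_mem (show x ∈ {x | α < φ x} from hx)]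
  · push_neg at hx
    rw [hLx, hB hx]
    simp [Set.indicator_of_notMem (show x ∉ {x | α < φ x} from not_lt.2 hx)]

end Aux

theorem stmt_10 {X : Type*} [MetricSpace X] [CompactSpace X]
    [MeasurableSpace X] [BorelSpace X]
    (P : X → Measure X) (hPprob : ∀ x, IsProbabilityMeasure (P x))
    (hPmeas : Measurable P)
    (μ : Measure X) [IsProbabilityMeasure μ] (hstat : μ.bind P = μ)
    (φ : X → ℝ) (hφm : Measurable φ) (hφb : ∃ C, ∀ x, |φ x| ≤ C)
    (hφinv : Lop P φ =ᵐ[μ] φ) :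
    ∀ α β : ℝ,
      (Lop P ({x | α < φ x}.indicator fun _ => (1 : ℝ))
        =ᵐ[μ] {x | α < φ x}.indicator fun _ => (1 : ℝ)) ∧
      (Lop P ({x | φ x < β}.indicator fun _ => (1 : ℝ))
        =ᵐ[μ] {x | φ x < β}.indicator fun _ => (1 : ℝ)) := by
  obtain ⟨C, hC⟩ := hφb
  intro α β
  constructor
  · exact mainA P hPprob hPmeas μ hstat φ hφm hC hφinv α
  · have hnegm : Measurable fun x => -φ x := hφm.neg
    have hnegb : ∀ x, |-φ x| ≤ C := fun x => by simpa [abs_neg] using hC x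
    have hLneg : Lop P (fun x => -φ x) = fun x => -Lop P φ x :=
      funext fun x => integral_neg _
    have hneginv : Lop P (fun x => -φ x) =ᵐ[μ] fun x => -φ x := by
      rw [hLneg]
      filter_upwards [hφinv] with x hx
      simp [hx]
    have h := mainA P hPprob hPmeas μ hstat _ hnegm hnegb hneginv (-β)
    have hset : {x : X | -β < -φ x} = {x | φ x < β} := by
      ext x; simp
    rwa [hset] at h
end

section
/- (Pointwise ergodic theorem for ergodic stationary measures of a transfer operator.) Let L be a transfer operator given by weak*-continuous transition probabilities on a compact metric space X, and let μ be a probability measure that is ergodic for L* (L*μ = μ and every μ-a.e. L-invariant set has measure 0 or 1). Then for every bounded measurable φ: lim_{n→∞} (1/n) Σ_{j=0}^{n-1} (L^jφ)(x) = ∫ φ dμ for μ-a.e. x ∈ X. -/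
open MeasureTheory Filter

namespace StmtAux

variable {X : Type*} [MeasurableSpace X] {P : X → Measure X}

lemma bdd_integrable {f : X → ℝ} {C : ℝ} (hm : Measurable f) (hb : ∀ x, |f x| ≤ C)
    (ν : Measure X) [IsFiniteMeasure ν] : Integrable f ν :=
  (integrable_const C).mono' hm.aestronglyMeasurable
    (Filter.Eventually.of_forall fun x => by simpa [Real.norm_eq_abs] using hb x)

lemma Lop_bound (hPprob : ∀ x, IsProbabilityMeasure (P x)) {f : X → ℝ} {C : ℝ}
    (hb : ∀ x, |f x| ≤ C) (x : X) : |Lop P f x| ≤ C := by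
  have := hPprob x
  have h := norm_integral_le_of_norm_le_const (μ := P x) (f := f) (C := C)
    (Filter.Eventually.of_forall fun y => by simpa [Real.norm_eq_abs] using hb y)
  simpa [Lop, Real.norm_eq_abs, measure_univ] using h

lemma Lop_eq_lintegral (hPprob : ∀ x, IsProbabilityMeasure (P x)) {f : X → ℝ} {C : ℝ}
    (hm : Measurable f) (hb : ∀ x, |f x| ≤ C) :
    Lop P f = fun x => (∫⁻ y, ENNReal.ofReal (f y + C) ∂P x).toReal - C := by
  funext x
  have := hPprob x
  have h1 : ∫ y, f y ∂P x = ∫ y, (f y + C) ∂P x - C := by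
    rw [integral_add (bdd_integrable hm hb _) (integrable_const C), integral_const]
    simp
  rw [Lop, h1, integral_eq_lintegral_of_nonneg_ae
    (Filter.Eventually.of_forall fun y => by
      have := abs_le.1 (hb y); simp only [Pi.zero_apply]; linarith)
    ((hm.add_const C).aestronglyMeasurable)]

lemma Lop_meas (hPmeas : Measurable P) (hPprob : ∀ x, IsProbabilityMeasure (P x))
    {f : X → ℝ} {C : ℝ} (hm : Measurable f) (hb : ∀ x, |f x| ≤ C) :
    Measurable (Lop P f) := by
  rw [Lop_eq_lintegral hPprob hm hb]
  haveI : ProbabilityTheory.IsMarkovKernel (⟨P, hPmeas⟩ : ProbabilityTheory.Kernel X X) :=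
    ⟨fun x => hPprob x⟩
  have : Measurable fun x => ∫⁻ y, ENNReal.ofReal (f y + C) ∂P x := by
    exact Measurable.lintegral_kernel (κ := ⟨P, hPmeas⟩) ((hm.add_const C).ennreal_ofReal)
  exact this.ennreal_toReal.sub measurable_const

lemma integral_Lop (hPmeas : Measurable P) (hPprob : ∀ x, IsProbabilityMeasure (P x))
    {μ : Measure X} [IsProbabilityMeasure μ] (hstat : μ.bind P = μ)
    {f : X → ℝ} {C : ℝ} (hm : Measurable f) (hb : ∀ x, |f x| ≤ C) :
    ∫ x, Lop P f x ∂μ = ∫ x, f x ∂μ := by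
  have hg : Measurable fun y => ENNReal.ofReal (f y + C) := (hm.add_const C).ennreal_ofReal
  have hGb : ∀ x, (∫⁻ y, ENNReal.ofReal (f y + C) ∂P x) ≤ ENNReal.ofReal (C + C) := by
    intro x
    have := hPprob x
    calc ∫⁻ y, ENNReal.ofReal (f y + C) ∂P x
        ≤ ∫⁻ _, ENNReal.ofReal (C + C) ∂P x := by
          apply lintegral_mono fun y => ENNReal.ofReal_le_ofReal (by have := abs_le.1 (hb y); linarith)
      _ = ENNReal.ofReal (C + C) := by simp
  haveI : ProbabilityTheory.IsMarkovKernel (⟨P, hPmeas⟩ : ProbabilityTheory.Kernel X X) :=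
    ⟨fun x => hPprob x⟩
  have hGmeas : Measurable fun x => ∫⁻ y, ENNReal.ofReal (f y + C) ∂P x :=
    Measurable.lintegral_kernel (κ := ⟨P, hPmeas⟩) hg
  rw [Lop_eq_lintegral hPprob hm hb]
  have hint : Integrable (fun x => (∫⁻ y, ENNReal.ofReal (f y + C) ∂P x).toReal) μ := by
    apply bdd_integrable hGmeas.ennreal_toReal (C := (ENNReal.ofReal (C + C)).toReal)
    intro x
    rw [abs_of_nonneg ENNReal.toReal_nonneg]
    exact ENNReal.toReal_mono ENNReal.ofReal_ne_top (hGb x)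
  rw [integral_sub hint (integrable_const C), integral_const]
  have h2 : ∫ x, (∫⁻ y, ENNReal.ofReal (f y + C) ∂P x).toReal ∂μ
      = (∫⁻ x, ∫⁻ y, ENNReal.ofReal (f y + C) ∂P x ∂μ).toReal := by
    apply integral_toReal hGmeas.aemeasurable
    exact Filter.Eventually.of_forall fun x => lt_of_le_of_lt (hGb x) ENNReal.ofReal_lt_top
  rw [h2, ← MeasureTheory.Measure.lintegral_bind hPmeas.aemeasurable hg.aemeasurable, hstat]
  rw [← integral_eq_lintegral_of_nonneg_ae
    (Filter.Eventually.of_forall fun y => by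
      have := abs_le.1 (hb y); simp only [Pi.zero_apply]; linarith)
    ((hm.add_const C).aestronglyMeasurable),
    integral_add (bdd_integrable hm hb _) (integrable_const C), integral_const]
  simp

end StmtAux

namespace StmtAux

variable {X : Type*} [MeasurableSpace X] {P : X → Measure X}

lemma Lop_mono (hPprob : ∀ x, IsProbabilityMeasure (P x))
    {f g : X → ℝ} {C D : ℝ} (hfm : Measurable f) (hfb : ∀ x, |f x| ≤ C)
    (hgm : Measurable g) (hgb : ∀ x, |g x| ≤ D) (hle : ∀ x, f x ≤ g x) (x : X) :
    Lop P f x ≤ Lop P g x := by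
  have := hPprob x
  exact integral_mono (bdd_integrable hfm hfb _) (bdd_integrable hgm hgb _) hle

lemma Lop_nonneg {f : X → ℝ} (hf : ∀ x, 0 ≤ f x) (x : X) : 0 ≤ Lop P f x :=
  integral_nonneg hf

lemma Lop_sub (hPprob : ∀ x, IsProbabilityMeasure (P x))
    {f g : X → ℝ} {C D : ℝ} (hfm : Measurable f) (hfb : ∀ x, |f x| ≤ C)
    (hgm : Measurable g) (hgb : ∀ x, |g x| ≤ D) (x : X) :
    Lop P (fun y => f y - g y) x = Lop P f x - Lop P g x := by
  have := hPprob x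
  exact integral_sub (bdd_integrable hfm hfb _) (bdd_integrable hgm hgb _)

lemma Lop_const (hPprob : ∀ x, IsProbabilityMeasure (P x)) (c : ℝ) (x : X) :
    Lop P (fun _ => c) x = c := by
  have := hPprob x
  simp [Lop]

lemma Lop_neg {f : X → ℝ} (x : X) : Lop P (fun y => -f y) x = -Lop P f x := by
  simp [Lop, integral_neg]

lemma Lop_smul {f : X → ℝ} (c : ℝ) (x : X) :
    Lop P (fun y => c * f y) x = c * Lop P f x := by
  simp only [Lop, ← smul_eq_mul]
  rw [integral_smul]

/-- boundedness and measurability of iterates -/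
lemma iter_meas_bound (hPmeas : Measurable P) (hPprob : ∀ x, IsProbabilityMeasure (P x))
    {f : X → ℝ} {C : ℝ} (hfm : Measurable f) (hfb : ∀ x, |f x| ≤ C) (j : ℕ) :
    Measurable ((Lop P)^[j] f) ∧ ∀ x, |(Lop P)^[j] f x| ≤ C := by
  induction j with
  | zero => exact ⟨hfm, hfb⟩
  | succ n ih =>
    rw [Function.iterate_succ_apply']
    exact ⟨Lop_meas hPmeas hPprob ih.1 ih.2, Lop_bound hPprob ih.2⟩

/-- Birkhoff sums -/
noncomputable def S (P : X → Measure X) (f : X → ℝ) (n : ℕ) : X → ℝ :=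
  fun x => ∑ j ∈ Finset.range n, (Lop P)^[j] f x

lemma S_meas (hPmeas : Measurable P) (hPprob : ∀ x, IsProbabilityMeasure (P x))
    {f : X → ℝ} {C : ℝ} (hfm : Measurable f) (hfb : ∀ x, |f x| ≤ C) (n : ℕ) :
    Measurable (S P f n) :=
  Finset.measurable_sum _ fun j _ => (iter_meas_bound hPmeas hPprob hfm hfb j).1

lemma S_bound (hPmeas : Measurable P) (hPprob : ∀ x, IsProbabilityMeasure (P x))
    {f : X → ℝ} {C : ℝ} (hfm : Measurable f) (hfb : ∀ x, |f x| ≤ C) (n : ℕ) (x : X) :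
    |S P f n x| ≤ n * C := by
  calc |S P f n x| ≤ ∑ j ∈ Finset.range n, |(Lop P)^[j] f x| :=
        Finset.abs_sum_le_sum_abs _ _
    _ ≤ ∑ _j ∈ Finset.range n, C :=
        Finset.sum_le_sum fun j _ => (iter_meas_bound hPmeas hPprob hfm hfb j).2 x
    _ = n * C := by simp [mul_comm]

lemma S_succ (hPmeas : Measurable P) (hPprob : ∀ x, IsProbabilityMeasure (P x))
    {f : X → ℝ} {C : ℝ} (hfm : Measurable f) (hfb : ∀ x, |f x| ≤ C) (n : ℕ) (x : X) :
    S P f (n + 1) x = f x + Lop P (S P f n) x := by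
  have := hPprob x
  have h1 : S P f (n+1) x = (∑ j ∈ Finset.range n, (Lop P)^[j+1] f x) + f x := by
    simpa [S] using Finset.sum_range_succ' (fun j => (Lop P)^[j] f x) n
  have h2 : ∀ j, (Lop P)^[j+1] f x = Lop P ((Lop P)^[j] f) x := fun j => by
    rw [Function.iterate_succ_apply']
  have h3 : Lop P (S P f n) x = ∑ j ∈ Finset.range n, Lop P ((Lop P)^[j] f) x := by
    rw [Lop]
    rw [show (fun y => S P f n y) = (fun y => ∑ j ∈ Finset.range n, (Lop P)^[j] f y) from rfl]
    rw [integral_finset_sum _ fun j _ =>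
      bdd_integrable (iter_meas_bound hPmeas hPprob hfm hfb j).1
        (iter_meas_bound hPmeas hPprob hfm hfb j).2 _]
    rfl
  rw [h1, h3]
  rw [Finset.sum_congr rfl fun j _ => h2 j]
  ring

lemma iter_sub_const (hPmeas : Measurable P) (hPprob : ∀ x, IsProbabilityMeasure (P x))
    {f : X → ℝ} {C : ℝ} (hfm : Measurable f) (hfb : ∀ x, |f x| ≤ C) (c : ℝ) (j : ℕ) :
    (Lop P)^[j] (fun x => f x - c) = fun x => (Lop P)^[j] f x - c := by
  induction j with
  | zero => rfl
  | succ n ih =>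
    rw [Function.iterate_succ_apply', Function.iterate_succ_apply', ih]
    funext x
    rw [Lop_sub hPprob (iter_meas_bound hPmeas hPprob hfm hfb n).1
      (iter_meas_bound hPmeas hPprob hfm hfb n).2 measurable_const
      (fun y => (abs_le.2 ⟨neg_abs_le c, le_abs_self c⟩ : |c| ≤ |c|)) x,
      Lop_const hPprob]

lemma S_sub_const (hPmeas : Measurable P) (hPprob : ∀ x, IsProbabilityMeasure (P x))
    {f : X → ℝ} {C : ℝ} (hfm : Measurable f) (hfb : ∀ x, |f x| ≤ C) (c : ℝ) (n : ℕ) (x : X) :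
    S P (fun y => f y - c) n x = S P f n x - n * c := by
  simp only [S]
  rw [Finset.sum_congr rfl fun j _ => by
    rw [iter_sub_const hPmeas hPprob hfm hfb c j]]
  rw [Finset.sum_sub_distrib]
  simp [mul_comm]

lemma iter_neg (j : ℕ) (f : X → ℝ) :
    (Lop P)^[j] (fun x => -f x) = fun x => -(Lop P)^[j] f x := by
  induction j with
  | zero => rfl
  | succ n ih =>
    rw [Function.iterate_succ_apply', Function.iterate_succ_apply', ih]
    funext x
    exact Lop_neg x

lemma S_neg (f : X → ℝ) (n : ℕ) (x : X) :
    S P (fun y => -f y) n x = -S P f n x := by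
  simp only [S]
  rw [Finset.sum_congr rfl fun j _ => by rw [iter_neg j f], ← Finset.sum_neg_distrib]

end StmtAux

namespace StmtAux

variable {X : Type*} [MeasurableSpace X] {P : X → Measure X}

/-- running maxima `Mx P f N = max (S P f 1) ... (S P f (N+1))` -/
noncomputable def Mx (P : X → Measure X) (f : X → ℝ) : ℕ → X → ℝ
  | 0 => S P f 1
  | (N+1) => fun x => max (Mx P f N x) (S P f (N+2) x)

lemma le_Mx {f : X → ℝ} {n N : ℕ} (h : n ≤ N) (x : X) : S P f (n+1) x ≤ Mx P f N x := by
  induction N with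
  | zero => simp_all [Mx]
  | succ m ih =>
    rcases Nat.lt_or_ge n (m+1) with h' | h'
    · exact le_trans (ih (Nat.lt_succ_iff.1 h')) (le_max_left _ _)
    · have : n = m + 1 := le_antisymm h h'
      subst this
      exact le_max_right _ _

lemma Mx_le {f : X → ℝ} {N : ℕ} {b : ℝ} {x : X}
    (h : ∀ n ≤ N, S P f (n+1) x ≤ b) : Mx P f N x ≤ b := by
  induction N with
  | zero => exact h 0 le_rfl
  | succ m ih =>
    exact max_le (ih fun n hn => h n (hn.trans (Nat.le_succ m))) (h (m+1) le_rfl)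

lemma Mx_mono {f : X → ℝ} (N : ℕ) (x : X) : Mx P f N x ≤ Mx P f (N+1) x :=
  le_max_left _ _

lemma Mx_meas (hPmeas : Measurable P) (hPprob : ∀ x, IsProbabilityMeasure (P x))
    {f : X → ℝ} {C : ℝ} (hfm : Measurable f) (hfb : ∀ x, |f x| ≤ C) (N : ℕ) :
    Measurable (Mx P f N) := by
  induction N with
  | zero => exact S_meas hPmeas hPprob hfm hfb 1
  | succ m ih => exact ih.max (S_meas hPmeas hPprob hfm hfb (m+2))

lemma Mx_bound (hPmeas : Measurable P) (hPprob : ∀ x, IsProbabilityMeasure (P x))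
    {f : X → ℝ} {C : ℝ} (hC : 0 ≤ C) (hfm : Measurable f) (hfb : ∀ x, |f x| ≤ C) (N : ℕ)
    (x : X) : |Mx P f N x| ≤ (N+2) * C := by
  induction N with
  | zero =>
    have := S_bound hPmeas hPprob hfm hfb 1 x
    simp only [Mx]
    push_cast at this ⊢
    nlinarith [abs_nonneg (S P f 1 x)]
  | succ m ih =>
    have h2 := S_bound hPmeas hPprob hfm hfb (m+2) x
    have : |Mx P f (m+1) x| ≤ max |Mx P f m x| |S P f (m+2) x| := abs_max_le_max_abs_abs
    have hm : ((m:ℝ)+2) * C ≤ ((m:ℝ)+1+2) * C := by nlinarith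
    refine le_trans this (max_le (le_trans ih ?_) (le_trans h2 ?_)) <;> push_cast <;> nlinarith

/-- Hopf's maximal ergodic lemma. -/
lemma maximal (hPmeas : Measurable P) (hPprob : ∀ x, IsProbabilityMeasure (P x))
    {μ : Measure X} [IsProbabilityMeasure μ] (hstat : μ.bind P = μ)
    {f : X → ℝ} {C : ℝ} (hC : 0 ≤ C) (hfm : Measurable f) (hfb : ∀ x, |f x| ≤ C) (N : ℕ) :
    0 ≤ ∫ x in {x | 0 < Mx P f N x}, f x ∂μ := by
  set Mp : X → ℝ := fun x => max (Mx P f N x) 0 with hMp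
  have hMxm : Measurable (Mx P f N) := Mx_meas hPmeas hPprob hfm hfb N
  have hMxb : ∀ x, |Mx P f N x| ≤ (N+2) * C := Mx_bound hPmeas hPprob hC hfm hfb N
  have hMpm : Measurable Mp := hMxm.max measurable_const
  have hMpb : ∀ x, |Mp x| ≤ (N+2) * C := fun x => by
    have := hMxb x
    have h0 : (0:ℝ) ≤ (N+2) * C := by positivity
    rw [hMp, abs_le]
    constructor
    · exact le_trans (by linarith) (le_max_right _ _)
    · exact max_le (abs_le.1 this).2 h0
  have hMpnn : ∀ x, 0 ≤ Mp x := fun x => le_max_right _ _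
  have hSleMp : ∀ n ≤ N, ∀ x, S P f n x ≤ Mp x := by
    intro n hn x
    cases n with
    | zero => simpa [S] using hMpnn x
    | succ m =>
      exact le_trans (le_Mx (Nat.le_of_succ_le hn) x) (le_max_left _ _)
  have key : ∀ x, Mx P f N x ≤ f x + Lop P Mp x := by
    intro x
    apply Mx_le
    intro n hn
    rw [S_succ hPmeas hPprob hfm hfb n x]
    have : Lop P (S P f n) x ≤ Lop P Mp x :=
      Lop_mono hPprob (S_meas hPmeas hPprob hfm hfb n)
        (S_bound hPmeas hPprob hfm hfb n) hMpm hMpb (hSleMp n hn) x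
    linarith
  set E : Set X := {x | 0 < Mx P f N x} with hEdef
  have hE : MeasurableSet E := measurableSet_lt measurable_const hMxm
  have hintf : Integrable f μ := bdd_integrable hfm hfb μ
  have hintMp : Integrable Mp μ := bdd_integrable hMpm hMpb μ
  have hintLMp : Integrable (Lop P Mp) μ :=
    bdd_integrable (Lop_meas hPmeas hPprob hMpm hMpb) (Lop_bound hPprob hMpb) μ
  have hintMx : Integrable (Mx P f N) μ := bdd_integrable hMxm hMxb μ
  have e1 : ∫ x, Mp x ∂μ = ∫ x in E, Mp x ∂μ := by
    rw [← integral_add_compl hE hintMp]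
    have : ∫ x in Eᶜ, Mp x ∂μ = 0 := by
      rw [setIntegral_congr_fun hE.compl (g := fun _ => (0:ℝ))
        (fun x hx => by
          simp only [hEdef, Set.mem_compl_iff, Set.mem_setOf_eq, not_lt] at hx
          simp [hMp, max_eq_right hx])]
      simp
    rw [this]; ring
  have e2 : ∫ x in E, Mp x ∂μ = ∫ x in E, Mx P f N x ∂μ :=
    setIntegral_congr_fun hE fun x hx => by
      simp only [hEdef, Set.mem_setOf_eq] at hx
      simp [hMp, max_eq_left hx.le]
  have e3 : ∫ x in E, Mx P f N x ∂μ ≤ ∫ x in E, (f x + Lop P Mp x) ∂μ :=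
    setIntegral_mono_on hintMx.integrableOn (hintf.add hintLMp).integrableOn hE
      fun x _ => key x
  have e4 : ∫ x in E, (f x + Lop P Mp x) ∂μ
      = ∫ x in E, f x ∂μ + ∫ x in E, Lop P Mp x ∂μ :=
    integral_add hintf.integrableOn hintLMp.integrableOn
  have e5 : ∫ x in E, Lop P Mp x ∂μ ≤ ∫ x, Lop P Mp x ∂μ :=
    setIntegral_le_integral hintLMp
      (Filter.Eventually.of_forall fun x => Lop_nonneg (fun y => hMpnn y) x)
  have e6 : ∫ x, Lop P Mp x ∂μ = ∫ x, Mp x ∂μ :=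
    integral_Lop hPmeas hPprob hstat hMpm hMpb
  linarith

end StmtAux

namespace StmtAux

variable {X : Type*} [MeasurableSpace X] {P : X → Measure X}

lemma bddAbove_of_abs {u : ℕ → ℝ} {C : ℝ} (h : ∀ n, |u n| ≤ C) :
    BddAbove (Set.range u) :=
  ⟨C, by rintro y ⟨k, rfl⟩; exact (abs_le.1 (h k)).2⟩

lemma bddBelow_of_abs {u : ℕ → ℝ} {C : ℝ} (h : ∀ n, |u n| ≤ C) :
    BddBelow (Set.range u) :=
  ⟨-C, by rintro y ⟨k, rfl⟩; exact (abs_le.1 (h k)).1⟩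

noncomputable def aa (P : X → Measure X) (f : X → ℝ) (n : ℕ) : X → ℝ :=
  fun x => S P f (n+1) x / (n+1)

noncomputable def hh (P : X → Measure X) (f : X → ℝ) (n : ℕ) : X → ℝ :=
  fun x => ⨆ k, aa P f (n+k) x

noncomputable def bb (P : X → Measure X) (f : X → ℝ) (n : ℕ) : X → ℝ :=
  fun x => ⨅ k, aa P f (n+k) x

noncomputable def FF (P : X → Measure X) (f : X → ℝ) : X → ℝ :=
  fun x => ⨅ n, hh P f n x

noncomputable def GG (P : X → Measure X) (f : X → ℝ) : X → ℝ :=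
  fun x => ⨆ n, bb P f n x

variable (hPmeas : Measurable P) (hPprob : ∀ x, IsProbabilityMeasure (P x))
  {f : X → ℝ} {C : ℝ}

section basic

set_option linter.unusedSectionVars false
variable (hC : 0 ≤ C) (hfm : Measurable f) (hfb : ∀ x, |f x| ≤ C)
include hPmeas hPprob hC hfm hfb

lemma aa_bound (n : ℕ) (x : X) : |aa P f n x| ≤ C := by
  have h := S_bound hPmeas hPprob hfm hfb (n+1) x
  rw [aa, abs_div, abs_of_nonneg (by positivity : (0:ℝ) ≤ (n:ℝ)+1)]
  rw [div_le_iff₀ (by positivity)]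
  push_cast at h ⊢
  nlinarith

lemma aa_meas (n : ℕ) : Measurable (aa P f n) :=
  (S_meas hPmeas hPprob hfm hfb (n+1)).div_const _

lemma hh_bound (n : ℕ) (x : X) : |hh P f n x| ≤ C := by
  rw [abs_le]
  constructor
  · exact le_trans (abs_le.1 (aa_bound hPmeas hPprob hC hfm hfb (n+0) x)).1
      (le_ciSup (bddAbove_of_abs fun k => aa_bound hPmeas hPprob hC hfm hfb (n+k) x) 0)
  · exact ciSup_le fun k => (abs_le.1 (aa_bound hPmeas hPprob hC hfm hfb (n+k) x)).2

lemma hh_meas (n : ℕ) : Measurable (hh P f n) :=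
  Measurable.iSup fun k => aa_meas hPmeas hPprob hC hfm hfb (n+k)

lemma hh_anti (n : ℕ) (x : X) : hh P f (n+1) x ≤ hh P f n x :=
  ciSup_le fun k =>
    le_ciSup_of_le (bddAbove_of_abs fun j => aa_bound hPmeas hPprob hC hfm hfb (n+j) x)
      (k+1) (by rw [show n + 1 + k = n + (k+1) by ring])

lemma bb_bound (n : ℕ) (x : X) : |bb P f n x| ≤ C := by
  rw [abs_le]
  constructor
  · exact le_ciInf fun k => (abs_le.1 (aa_bound hPmeas hPprob hC hfm hfb (n+k) x)).1
  · exact le_trans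
      (ciInf_le (bddBelow_of_abs fun k => aa_bound hPmeas hPprob hC hfm hfb (n+k) x) 0)
      (abs_le.1 (aa_bound hPmeas hPprob hC hfm hfb (n+0) x)).2

lemma bb_meas (n : ℕ) : Measurable (bb P f n) :=
  Measurable.iInf fun k => aa_meas hPmeas hPprob hC hfm hfb (n+k)

lemma bb_mono (n : ℕ) (x : X) : bb P f n x ≤ bb P f (n+1) x :=
  le_ciInf fun k =>
    ciInf_le_of_le (bddBelow_of_abs fun j => aa_bound hPmeas hPprob hC hfm hfb (n+j) x)
      (k+1) (by rw [show n + 1 + k = n + (k+1) by ring])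

lemma FF_bound (x : X) : |FF P f x| ≤ C := by
  rw [abs_le]
  constructor
  · exact le_ciInf fun n => (abs_le.1 (hh_bound hPmeas hPprob hC hfm hfb n x)).1
  · exact le_trans
      (ciInf_le (bddBelow_of_abs fun n => hh_bound hPmeas hPprob hC hfm hfb n x) 0)
      (abs_le.1 (hh_bound hPmeas hPprob hC hfm hfb 0 x)).2

lemma FF_meas : Measurable (FF P f) :=
  Measurable.iInf fun n => hh_meas hPmeas hPprob hC hfm hfb n

lemma GG_bound (x : X) : |GG P f x| ≤ C := by
  rw [abs_le]
  constructor
  · exact le_trans (abs_le.1 (bb_bound hPmeas hPprob hC hfm hfb 0 x)).1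
      (le_ciSup (bddAbove_of_abs fun n => bb_bound hPmeas hPprob hC hfm hfb n x) 0)
  · exact ciSup_le fun n => (abs_le.1 (bb_bound hPmeas hPprob hC hfm hfb n x)).2

lemma GG_meas : Measurable (GG P f) :=
  Measurable.iSup fun n => bb_meas hPmeas hPprob hC hfm hfb n

lemma bb_le_hh (n m : ℕ) (x : X) : bb P f n x ≤ hh P f m x := by
  have h1 : bb P f n x ≤ aa P f (max n m) x := by
    have := ciInf_le (bddBelow_of_abs fun j => aa_bound hPmeas hPprob hC hfm hfb (n+j) x)
      (max n m - n)
    rwa [Nat.add_sub_cancel' (le_max_left n m)] at this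
  have h2 : aa P f (max n m) x ≤ hh P f m x := by
    have := le_ciSup (bddAbove_of_abs fun j => aa_bound hPmeas hPprob hC hfm hfb (m+j) x)
      (max n m - m)
    rwa [Nat.add_sub_cancel' (le_max_right n m)] at this
  exact h1.trans h2

lemma GG_le_FF (x : X) : GG P f x ≤ FF P f x :=
  ciSup_le fun n => le_ciInf fun m => bb_le_hh hPmeas hPprob hC hfm hfb n m x

lemma tendsto_hh (x : X) : Tendsto (fun n => hh P f n x) atTop (nhds (FF P f x)) :=
  tendsto_atTop_ciInf
    (antitone_nat_of_succ_le fun n => hh_anti hPmeas hPprob hC hfm hfb n x)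
    (bddBelow_of_abs fun n => hh_bound hPmeas hPprob hC hfm hfb n x)

lemma tendsto_bb (x : X) : Tendsto (fun n => bb P f n x) atTop (nhds (GG P f x)) :=
  tendsto_atTop_ciSup
    (monotone_nat_of_le_succ fun n => bb_mono hPmeas hPprob hC hfm hfb n x)
    (bddAbove_of_abs fun n => bb_bound hPmeas hPprob hC hfm hfb n x)

lemma aa_rec (m : ℕ) (x : X) :
    aa P f (m+1) x = f x / (m+2) + ((m+1) / (m+2)) * Lop P (aa P f m) x := by
  have := hPprob x
  have h1 : Lop P (aa P f m) x = Lop P (S P f (m+1)) x / (m+1) := by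
    rw [Lop, Lop]
    rw [show (fun y => aa P f m y) = fun y => S P f (m+1) y / ((m:ℝ)+1) from rfl]
    rw [integral_div]
  have h2 : S P f (m+2) x = f x + Lop P (S P f (m+1)) x :=
    S_succ hPmeas hPprob hfm hfb (m+1) x
  rw [aa, h1]
  push_cast
  rw [h2]
  field_simp
  ring

lemma FF_le_Lop_FF (x : X) : FF P f x ≤ Lop P (FF P f) x := by
  have key : ∀ n : ℕ, FF P f x ≤ Lop P (hh P f n) x + 2*C/(n+2) := by
    intro n
    have step : ∀ m, n ≤ m →
        aa P f (m+1) x ≤ Lop P (hh P f n) x + 2*C/(m+2) := by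
      intro m hm
      have hle : ∀ y, aa P f m y ≤ hh P f n y := by
        intro y
        have := le_ciSup (bddAbove_of_abs fun j => aa_bound hPmeas hPprob hC hfm hfb (n+j) y)
          (m - n)
        rwa [Nat.add_sub_cancel' hm] at this
      have hLle : Lop P (aa P f m) x ≤ Lop P (hh P f n) x :=
        Lop_mono hPprob (aa_meas hPmeas hPprob hC hfm hfb m)
          (aa_bound hPmeas hPprob hC hfm hfb m)
          (hh_meas hPmeas hPprob hC hfm hfb n)
          (hh_bound hPmeas hPprob hC hfm hfb n) hle x
      have hLb : |Lop P (aa P f m) x| ≤ C :=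
        Lop_bound hPprob (aa_bound hPmeas hPprob hC hfm hfb m) x
      rw [aa_rec hPmeas hPprob hC hfm hfb m x]
      have hfx := abs_le.1 (hfb x)
      have hr := abs_le.1 hLb
      have hpos : (0:ℝ) < (m:ℝ)+2 := by positivity
      set r := Lop P (aa P f m) x with hrdef
      set R := Lop P (hh P f n) x with hRdef
      have e : f x / ((m:ℝ)+2) + (((m:ℝ)+1)/((m:ℝ)+2)) * r - (R + 2*C/((m:ℝ)+2))
          = (f x + ((m:ℝ)+1)*r - (((m:ℝ)+2)*R + 2*C))/((m:ℝ)+2) := by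
        field_simp
      have hnum : f x + ((m:ℝ)+1)*r - (((m:ℝ)+2)*R + 2*C) ≤ 0 := by
        nlinarith [mul_nonneg (by positivity : (0:ℝ) ≤ (m:ℝ)+1) (sub_nonneg.2 hLle)]
      have := e ▸ div_nonpos_of_nonpos_of_nonneg hnum hpos.le
      push_cast
      linarith [sub_nonpos.1 this]
    have h4 : hh P f (n+1) x ≤ Lop P (hh P f n) x + 2*C/(n+2) := by
      apply ciSup_le
      intro k
      have := step (n+k) (Nat.le_add_right n k)
      rw [show n + 1 + k = n + k + 1 by ring]
      refine this.trans ?_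
      have : 2*C/((n:ℝ)+k+2) ≤ 2*C/((n:ℝ)+2) := by
        apply div_le_div_of_nonneg_left (by linarith) (by positivity) ?_
        · push_cast; linarith
      · push_cast at this ⊢; linarith
    exact le_trans (ciInf_le (bddBelow_of_abs fun j =>
      hh_bound hPmeas hPprob hC hfm hfb j x) (n+1)) h4
  have hlim : Tendsto (fun n : ℕ => Lop P (hh P f n) x + 2*C/(n+2)) atTop
      (nhds (Lop P (FF P f) x + 0)) := by
    apply Tendsto.add
    · have := hPprob x
      apply tendsto_integral_of_dominated_convergence (fun _ => C)
        (fun n => (hh_meas hPmeas hPprob hC hfm hfb n).aestronglyMeasurable)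
        (integrable_const C)
        (fun n => Filter.Eventually.of_forall fun y => by
          simpa [Real.norm_eq_abs] using hh_bound hPmeas hPprob hC hfm hfb n y)
        (Filter.Eventually.of_forall fun y => tendsto_hh hPmeas hPprob hC hfm hfb y)
    · apply Tendsto.div_atTop tendsto_const_nhds
      apply tendsto_atTop_add_const_right
      exact tendsto_natCast_atTop_atTop
  rw [add_zero] at hlim
  exact ge_of_tendsto hlim (Filter.Eventually.of_forall key)

end basic

end StmtAux

namespace StmtAux

open scoped ENNReal

set_option linter.unusedSectionVars false

variable {X : Type*} [MeasurableSpace X] {P : X → Measure X}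

lemma ae_eq_of_nonneg_of_integral_zero {μ : Measure X} [IsProbabilityMeasure μ]
    {d : X → ℝ} {D : ℝ} (hdm : Measurable d) (hdb : ∀ x, |d x| ≤ D)
    (hnn : ∀ᵐ x ∂μ, 0 ≤ d x) (hz : ∫ x, d x ∂μ = 0) : d =ᵐ[μ] fun _ => (0:ℝ) := by
  have hint : Integrable d μ := bdd_integrable hdm hdb μ
  exact (integral_eq_zero_iff_of_nonneg_ae hnn hint).1 hz

lemma FF_invariant (hPmeas : Measurable P) (hPprob : ∀ x, IsProbabilityMeasure (P x))
    {μ : Measure X} [IsProbabilityMeasure μ] (hstat : μ.bind P = μ)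
    {f : X → ℝ} {C : ℝ} (hC : 0 ≤ C) (hfm : Measurable f) (hfb : ∀ x, |f x| ≤ C) :
    Lop P (FF P f) =ᵐ[μ] FF P f := by
  have hFm := FF_meas hPmeas hPprob hC hfm hfb
  have hFb := FF_bound hPmeas hPprob hC hfm hfb
  have hLm := Lop_meas hPmeas hPprob hFm hFb
  have hLb := Lop_bound hPprob hFb
  have hd : ∀ x, |Lop P (FF P f) x - FF P f x| ≤ C + C := fun x => by
    have := abs_le.1 (hLb x); have := abs_le.1 (hFb x); rw [abs_le]; constructor <;> linarith
  have hz : ∫ x, (Lop P (FF P f) x - FF P f x) ∂μ = 0 := by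
    rw [integral_sub (bdd_integrable hLm hLb μ) (bdd_integrable hFm hFb μ),
      integral_Lop hPmeas hPprob hstat hFm hFb, sub_self]
  have := ae_eq_of_nonneg_of_integral_zero (hLm.sub hFm) hd
    (Filter.Eventually.of_forall fun x =>
      sub_nonneg.2 (FF_le_Lop_FF hPmeas hPprob hC hfm hfb x)) hz
  filter_upwards [this] with x hx
  have : Lop P (FF P f) x - FF P f x = 0 := hx
  linarith

/-- every bounded measurable a.e. invariant function is a.e. constant -/
lemma invariant_const (hPmeas : Measurable P) (hPprob : ∀ x, IsProbabilityMeasure (P x))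
    {μ : Measure X} [IsProbabilityMeasure μ] (hstat : μ.bind P = μ)
    (herg : ∀ A : Set X, MeasurableSet A →
      (Lop P (A.indicator fun _ => (1 : ℝ)) =ᵐ[μ] A.indicator fun _ => (1 : ℝ)) →
      μ A = 0 ∨ μ A = 1)
    {F0 : X → ℝ} {D : ℝ} (hD : 0 ≤ D) (hFm : Measurable F0) (hFb : ∀ x, |F0 x| ≤ D)
    (hinv : Lop P F0 =ᵐ[μ] F0) : ∃ c, F0 =ᵐ[μ] fun _ => c := by
  -- max with constants is invariant
  set u : ℝ → X → ℝ := fun c x => max (F0 x) c with hu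
  have hum : ∀ c, Measurable (u c) := fun c => hFm.max measurable_const
  have hub : ∀ c x, |u c x| ≤ D + |c| := fun c x => by
    have h1 := abs_le.1 (hFb x)
    have h2 := abs_le.1 (le_refl |c|)
    rw [abs_le]
    constructor
    · exact le_trans (by linarith [neg_abs_le c]) (le_max_left _ _)
    · exact max_le (by linarith) (by linarith [le_abs_self c])
  have hu_inv : ∀ c, Lop P (u c) =ᵐ[μ] u c := by
    intro c
    have hge : ∀ᵐ x ∂μ, u c x ≤ Lop P (u c) x := by
      filter_upwards [hinv] with x hx
      have h1 : Lop P F0 x ≤ Lop P (u c) x :=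
        Lop_mono hPprob hFm hFb (hum c) (hub c) (fun y => le_max_left _ _) x
      have h2 : (c:ℝ) ≤ Lop P (u c) x := by
        have := Lop_mono hPprob (measurable_const (a := c)) (fun y => le_refl |c|)
          (hum c) (hub c) (fun y => le_max_right _ _) x
        rwa [Lop_const hPprob c x] at this
      exact max_le (by rw [← hx]; exact h1) h2
    have hz : ∫ x, (Lop P (u c) x - u c x) ∂μ = 0 := by
      rw [integral_sub (bdd_integrable (Lop_meas hPmeas hPprob (hum c) (hub c))
          (Lop_bound hPprob (hub c)) μ) (bdd_integrable (hum c) (hub c) μ),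
        integral_Lop hPmeas hPprob hstat (hum c) (hub c), sub_self]
    have hdb : ∀ x, |Lop P (u c) x - u c x| ≤ (D + |c|) + (D + |c|) := fun x => by
      have := abs_le.1 (Lop_bound hPprob (hub c) x); have := abs_le.1 (hub c x)
      rw [abs_le]; constructor <;> linarith
    have := ae_eq_of_nonneg_of_integral_zero
      ((Lop_meas hPmeas hPprob (hum c) (hub c)).sub (hum c)) hdb
      (by filter_upwards [hge] with x hx; rw [Pi.sub_apply]; linarith) hz
    filter_upwards [this] with x hx
    have : Lop P (u c) x - u c x = 0 := hx
    linarith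
  -- each sublevel set is invariant, hence has measure 0 or 1
  have hlevel : ∀ c : ℝ, μ {x | F0 x ≤ c} = 0 ∨ μ {x | F0 x ≤ c} = 1 := by
    intro c
    set A : Set X := {x | F0 x ≤ c} with hA
    have hAmeas : MeasurableSet A := measurableSet_le hFm measurable_const
    set v : ℕ → X → ℝ := fun k x => ((k:ℝ)+1) * (u (c + 1/((k:ℝ)+1)) x - u c x) with hv
    have huu : ∀ (k : ℕ) (x : X), u c x ≤ u (c + 1/((k:ℝ)+1)) x ∧
        u (c + 1/((k:ℝ)+1)) x - u c x ≤ 1/((k:ℝ)+1) := by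
      intro k x
      have hδ : (0:ℝ) < 1/((k:ℝ)+1) := by positivity
      constructor
      · exact max_le (le_max_left _ _) (le_trans (by linarith) (le_max_right _ _))
      · have : u (c + 1/((k:ℝ)+1)) x ≤ u c x + 1/((k:ℝ)+1) :=
          max_le (le_trans (le_max_left _ _) (by linarith)) (by
            have := le_max_right (F0 x) c; linarith)
        linarith
    have hv01 : ∀ k x, 0 ≤ v k x ∧ v k x ≤ 1 := by
      intro k x
      obtain ⟨h1, h2⟩ := huu k x
      have hk : (0:ℝ) < (k:ℝ)+1 := by positivity
      constructor
      · exact mul_nonneg hk.le (by linarith)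
      · have hmul := mul_le_mul_of_nonneg_left h2 hk.le
        have he : ((k:ℝ)+1) * (1/((k:ℝ)+1)) = 1 := by field_simp
        show ((k:ℝ)+1) * (u (c + 1/((k:ℝ)+1)) x - u c x) ≤ 1
        linarith
    have hvb : ∀ k x, |v k x| ≤ 1 := fun k x => by
      obtain ⟨h1, h2⟩ := hv01 k x; rw [abs_le]; constructor <;> linarith
    have hvm : ∀ k, Measurable (v k) := fun k =>
      (((hum _).sub (hum c)).const_mul _)
    have hv_inv : ∀ k, Lop P (v k) =ᵐ[μ] v k := by
      intro k
      have e : ∀ x, Lop P (v k) x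
          = ((k:ℝ)+1) * (Lop P (u (c + 1/((k:ℝ)+1))) x - Lop P (u c) x) := by
        intro x
        rw [hv]
        have : Lop P (fun y => ((k:ℝ)+1) * (u (c + 1/((k:ℝ)+1)) y - u c y)) x
            = ((k:ℝ)+1) * Lop P (fun y => u (c + 1/((k:ℝ)+1)) y - u c y) x := Lop_smul _ x
        rw [this, Lop_sub hPprob (hum _) (hub _) (hum c) (hub c) x]
      filter_upwards [hu_inv (c + 1/((k:ℝ)+1)), hu_inv c] with x h1 h2
      rw [e x, h1, h2]
    -- pointwise limit of v is the indicator of A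
    have hvlim : ∀ x, Tendsto (fun k => v k x) atTop (nhds (A.indicator (fun _ => (1:ℝ)) x)) := by
      intro x
      rcases le_or_gt (F0 x) c with hle | hlt
      · have : ∀ k, v k x = 1 := by
          intro k
          have hδ : (0:ℝ) < 1/((k:ℝ)+1) := by positivity
          have e1 : u (c + 1/((k:ℝ)+1)) x = c + 1/((k:ℝ)+1) := max_eq_right (by linarith)
          have e2 : u c x = c := max_eq_right hle
          rw [hv]; simp only [e1, e2]
          field_simp
          ring
        rw [Set.indicator_of_mem (show x ∈ A from hle) (fun _ => (1:ℝ))]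
        simpa [this] using tendsto_const_nhds
      · obtain ⟨K, hK⟩ := exists_nat_one_div_lt (sub_pos.2 hlt)
        have : ∀ k ≥ K, v k x = 0 := by
          intro k hk
          have hδle : 1/((k:ℝ)+1) ≤ 1/((K:ℝ)+1) := by
            apply div_le_div_of_nonneg_left one_pos.le (by positivity) ?_
            · push_cast; exact add_le_add (Nat.cast_le.2 hk) le_rfl
          have hδ : 1/((k:ℝ)+1) < F0 x - c := lt_of_le_of_lt hδle hK
          have e1 : u (c + 1/((k:ℝ)+1)) x = F0 x := max_eq_left (by linarith)
          have e2 : u c x = F0 x := max_eq_left hlt.le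
          rw [hv]; simp only [e1, e2]; ring
        rw [Set.indicator_of_notMem (show x ∉ A from by simp only [hA, Set.mem_setOf_eq]; exact not_le_of_gt hlt) (fun _ => (1:ℝ))]
        apply Tendsto.congr' _ (tendsto_const_nhds (x := (0:ℝ)))
        filter_upwards [eventually_ge_atTop K] with k hk
        exact (this k hk).symm
    have hvLlim : ∀ x, Tendsto (fun k => Lop P (v k) x) atTop
        (nhds (Lop P (A.indicator fun _ => (1:ℝ)) x)) := by
      intro x
      have := hPprob x
      apply tendsto_integral_of_dominated_convergence (fun _ => (1:ℝ))
        (fun k => (hvm k).aestronglyMeasurable) (integrable_const 1)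
        (fun k => Filter.Eventually.of_forall fun y => by
          simpa [Real.norm_eq_abs] using hvb k y)
        (Filter.Eventually.of_forall fun y => hvlim y)
    have hind : Lop P (A.indicator fun _ => (1:ℝ)) =ᵐ[μ] A.indicator fun _ => (1:ℝ) := by
      have hall : ∀ᵐ x ∂μ, ∀ k, Lop P (v k) x = v k x := ae_all_iff.2 hv_inv
      filter_upwards [hall] with x hx
      have t1 : Tendsto (fun k => v k x) atTop (nhds (Lop P (A.indicator fun _ => (1:ℝ)) x)) :=
        (hvLlim x).congr fun k => hx k
      exact tendsto_nhds_unique t1 (hvlim x)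
    exact herg A hAmeas hind
  -- conclude constancy
  set Sc : Set ℝ := {c | μ {x | F0 x ≤ c} = 1} with hSc
  have hDin : D ∈ Sc := by
    have : {x | F0 x ≤ D} = Set.univ := Set.eq_univ_of_forall fun x => (abs_le.1 (hFb x)).2
    simp [hSc, this]
  have hbdd : ∀ c ∈ Sc, -D - 1 ≤ c := by
    intro c hc
    by_contra h
    push_neg at h
    have : {x | F0 x ≤ c} = (∅ : Set X) := by
      ext x
      simp only [Set.mem_setOf_eq, Set.mem_empty_iff_false, iff_false, not_le]
      have := (abs_le.1 (hFb x)).1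
      linarith
    rw [hSc] at hc
    simp only [Set.mem_setOf_eq, this] at hc
    simp at hc
  set c₀ := sInf Sc with hc₀
  have hSne : Sc.Nonempty := ⟨D, hDin⟩
  have hSbdd : BddBelow Sc := ⟨-D - 1, fun c hc => hbdd c hc⟩
  refine ⟨c₀, ?_⟩
  have hup : ∀ ε > 0, μ {x | F0 x ≤ c₀ + ε} = 1 := by
    intro ε hε
    obtain ⟨c, hcS, hclt⟩ := (csInf_lt_iff hSbdd hSne).1 (by linarith : c₀ < c₀ + ε)
    refine le_antisymm prob_le_one ?_
    calc (1:ℝ≥0∞) = μ {x | F0 x ≤ c} := hcS.symm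
      _ ≤ μ {x | F0 x ≤ c₀ + ε} := measure_mono fun x hx => le_trans hx hclt.le
  have hdown : ∀ ε > 0, μ {x | F0 x ≤ c₀ - ε} = 0 := by
    intro ε hε
    have hnotin : (c₀ - ε) ∉ Sc := fun h => absurd (csInf_le hSbdd h) (by linarith)
    rcases hlevel (c₀ - ε) with h | h
    · exact h
    · exact absurd h hnotin
  have hgt : μ {x | c₀ < F0 x} = 0 := by
    have hsub : {x | c₀ < F0 x} ⊆ ⋃ k : ℕ, {x | F0 x ≤ c₀ + 1/((k:ℝ)+1)}ᶜ := by
      intro x hx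
      simp only [Set.mem_setOf_eq] at hx
      obtain ⟨K, hK⟩ := exists_nat_one_div_lt (sub_pos.2 hx)
      exact Set.mem_iUnion.2 ⟨K, by simp only [Set.mem_compl_iff, Set.mem_setOf_eq, not_le]; linarith⟩
    refine measure_mono_null hsub (measure_iUnion_null fun k => ?_)
    have hm : MeasurableSet {x | F0 x ≤ c₀ + 1/((k:ℝ)+1)} := measurableSet_le hFm measurable_const
    rw [measure_compl hm (measure_ne_top μ _), hup (1/((k:ℝ)+1)) (by positivity), measure_univ,
      tsub_self]
  have hlt : μ {x | F0 x < c₀} = 0 := by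
    have hsub : {x | F0 x < c₀} ⊆ ⋃ k : ℕ, {x | F0 x ≤ c₀ - 1/((k:ℝ)+1)} := by
      intro x hx
      simp only [Set.mem_setOf_eq] at hx
      obtain ⟨K, hK⟩ := exists_nat_one_div_lt (sub_pos.2 hx)
      exact Set.mem_iUnion.2 ⟨K, by simp only [Set.mem_setOf_eq]; linarith⟩
    exact measure_mono_null hsub (measure_iUnion_null fun k => hdown _ (by positivity))
  rw [Filter.EventuallyEq, ae_iff]
  refine measure_mono_null (fun x hx => ?_) (measure_union_null hgt hlt)
  simp only [Set.mem_setOf_eq] at hx ⊢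
  rcases lt_trichotomy (F0 x) c₀ with h | h | h
  · exact Or.inr h
  · exact absurd h hx
  · exact Or.inl h

end StmtAux

namespace StmtAux

open scoped ENNReal
set_option linter.unusedSectionVars false

variable {X : Type*} [MeasurableSpace X] {P : X → Measure X}

lemma ciSup_neg_eq {u : ℕ → ℝ} {C : ℝ} (h : ∀ n, |u n| ≤ C) :
    ⨆ i, -u i = -⨅ i, u i := by
  apply le_antisymm
  · exact ciSup_le fun i => neg_le_neg (ciInf_le (bddBelow_of_abs h) i)
  · rw [neg_le]
    apply le_ciInf
    intro i
    have := le_ciSup (bddAbove_of_abs (fun n => by simpa [abs_neg] using h n)) i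
      (f := fun i => -u i)
    linarith

lemma ciInf_neg_eq {u : ℕ → ℝ} {C : ℝ} (h : ∀ n, |u n| ≤ C) :
    ⨅ i, -u i = -⨆ i, u i := by
  have := ciSup_neg_eq (u := fun i => -u i) (C := C) (fun n => by simpa [abs_neg] using h n)
  simp only [neg_neg] at this
  linarith

lemma FF_neg (hPmeas : Measurable P) (hPprob : ∀ x, IsProbabilityMeasure (P x))
    {f : X → ℝ} {C : ℝ} (hC : 0 ≤ C) (hfm : Measurable f) (hfb : ∀ x, |f x| ≤ C) (x : X) :
    FF P (fun y => -f y) x = -GG P f x := by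
  have haa : ∀ n y, aa P (fun z => -f z) n y = -aa P f n y := by
    intro n y
    rw [aa, aa, S_neg, neg_div]
  have hhh : ∀ n y, hh P (fun z => -f z) n y = -bb P f n y := by
    intro n y
    rw [hh, bb]
    rw [show (fun k => aa P (fun z => -f z) (n+k) y) = fun k => -aa P f (n+k) y from
      funext fun k => haa (n+k) y]
    exact ciSup_neg_eq (fun k => aa_bound hPmeas hPprob hC hfm hfb (n+k) y)
  rw [FF, GG]
  rw [show (fun n => hh P (fun z => -f z) n x) = fun n => -bb P f n x from
    funext fun n => hhh n x]
  exact ciInf_neg_eq (fun n => bb_bound hPmeas hPprob hC hfm hfb n x)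

lemma upper (hPmeas : Measurable P) (hPprob : ∀ x, IsProbabilityMeasure (P x))
    {μ : Measure X} [IsProbabilityMeasure μ] (hstat : μ.bind P = μ)
    (herg : ∀ A : Set X, MeasurableSet A →
      (Lop P (A.indicator fun _ => (1 : ℝ)) =ᵐ[μ] A.indicator fun _ => (1 : ℝ)) →
      μ A = 0 ∨ μ A = 1)
    {f : X → ℝ} {C : ℝ} (hC : 0 ≤ C) (hfm : Measurable f) (hfb : ∀ x, |f x| ≤ C) :
    ∃ c, (FF P f =ᵐ[μ] fun _ => c) ∧ c ≤ ∫ x, f x ∂μ := by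
  obtain ⟨c, hc⟩ := invariant_const hPmeas hPprob hstat herg hC
    (FF_meas hPmeas hPprob hC hfm hfb) (FF_bound hPmeas hPprob hC hfm hfb)
    (FF_invariant hPmeas hPprob hstat hC hfm hfb)
  refine ⟨c, hc, ?_⟩
  -- show c - ε ≤ ∫ f for every ε > 0
  have key : ∀ ε > 0, c - ε ≤ ∫ x, f x ∂μ := by
    intro ε hε
    set g : X → ℝ := fun x => f x - (c - ε) with hg
    have hgm : Measurable g := hfm.sub measurable_const
    have hgb : ∀ x, |g x| ≤ C + |c - ε| := fun x => by
      have h2 : |g x| = |f x - (c - ε)| := rfl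
      rw [h2]
      calc |f x - (c - ε)| = |f x + -(c - ε)| := by ring_nf
        _ ≤ |f x| + |-(c - ε)| := abs_add_le _ _
        _ = |f x| + |c - ε| := by rw [abs_neg]
        _ ≤ C + |c - ε| := by linarith [hfb x]
    have hgC : (0:ℝ) ≤ C + |c - ε| := by positivity
    set E : ℕ → Set X := fun N => {x | 0 < Mx P g N x} with hE
    have hEmeas : ∀ N, MeasurableSet (E N) :=
      fun N => measurableSet_lt measurable_const (Mx_meas hPmeas hPprob hgm hgb N)
    have hEmono : Monotone E := monotone_nat_of_le_succ fun N x hx => by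
      simp only [hE, Set.mem_setOf_eq] at hx ⊢
      exact lt_of_lt_of_le hx (Mx_mono N x)
    have hsub : {x | FF P f x = c} ⊆ ⋃ N, E N := by
      intro x hx
      simp only [Set.mem_setOf_eq] at hx
      have h0 : FF P f x ≤ hh P f 0 x :=
        ciInf_le (bddBelow_of_abs fun n => hh_bound hPmeas hPprob hC hfm hfb n x) 0
      have h1 : c - ε < hh P f 0 x := by rw [← hx]; linarith
      rw [hh] at h1
      obtain ⟨k, hk⟩ := (lt_ciSup_iff
        (bddAbove_of_abs fun j => aa_bound hPmeas hPprob hC hfm hfb (0+j) x)).1 h1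
      simp only [Nat.zero_add] at hk
      rw [aa] at hk
      have hkpos : (0:ℝ) < (k:ℝ)+1 := by positivity
      have hS : (c - ε) * ((k:ℝ)+1) < S P f (k+1) x := by
        rw [lt_div_iff₀ hkpos] at hk
        push_cast at hk ⊢
        linarith
      have hSg : 0 < S P g (k+1) x := by
        rw [hg, S_sub_const hPmeas hPprob hfm hfb (c - ε) (k+1) x]
        push_cast
        nlinarith
      refine Set.mem_iUnion.2 ⟨k, ?_⟩
      simp only [hE, Set.mem_setOf_eq]
      exact lt_of_lt_of_le hSg (le_Mx le_rfl x)
    have hFFc : μ {x | FF P f x = c} = 1 := by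
      have hm : MeasurableSet {x | FF P f x = c} :=
        measurableSet_eq_fun (FF_meas hPmeas hPprob hC hfm hfb) measurable_const
      have h0 : μ {x | ¬ FF P f x = c} = 0 := ae_iff.1 hc
      have : {x | FF P f x = c}ᶜ = {x | ¬ FF P f x = c} := rfl
      rw [← prob_compl_eq_zero_iff hm, this, h0]
    have hUc : μ (⋃ N, E N)ᶜ = 0 := by
      have h1 : (⋃ N, E N)ᶜ ⊆ {x | FF P f x = c}ᶜ := Set.compl_subset_compl.2 hsub
      apply measure_mono_null h1
      have hm : MeasurableSet {x | FF P f x = c} :=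
        measurableSet_eq_fun (FF_meas hPmeas hPprob hC hfm hfb) measurable_const
      rw [prob_compl_eq_zero_iff hm]
      exact hFFc
    have hgint : Integrable g μ := bdd_integrable hgm hgb μ
    have htend : Tendsto (fun N => ∫ x in E N, g x ∂μ) atTop
        (nhds (∫ x in ⋃ N, E N, g x ∂μ)) :=
      tendsto_setIntegral_of_monotone hEmeas hEmono hgint.integrableOn
    have hlim_eq : ∫ x in ⋃ N, E N, g x ∂μ = ∫ x, g x ∂μ := by
      have hU : MeasurableSet (⋃ N, E N) := MeasurableSet.iUnion hEmeas
      rw [← integral_add_compl hU hgint]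
      have : ∫ x in (⋃ N, E N)ᶜ, g x ∂μ = 0 := by
        rw [Measure.restrict_eq_zero.2 hUc, integral_zero_measure]
      rw [this, add_zero]
    have hpos : 0 ≤ ∫ x in ⋃ N, E N, g x ∂μ :=
      ge_of_tendsto htend (Filter.Eventually.of_forall fun N =>
        maximal hPmeas hPprob hstat hgC hgm hgb N)
    have : 0 ≤ ∫ x, g x ∂μ := hlim_eq ▸ hpos
    rw [hg] at this
    rw [integral_sub (bdd_integrable hfm hfb μ) (integrable_const _), integral_const] at this
    simp only [measure_univ, probReal_univ, ENNReal.toReal_one, one_smul, one_mul, smul_eq_mul] at this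
    linarith
  by_contra h
  push_neg at h
  have := key ((c - ∫ x, f x ∂μ)/2) (by linarith)
  linarith

end StmtAux


theorem stmt_14 {X : Type*} [MetricSpace X] [CompactSpace X]
    [MeasurableSpace X] [BorelSpace X]
    (P : X → Measure X) (hPprob : ∀ x, IsProbabilityMeasure (P x))
    (hPmeas : Measurable P)
    (μ : Measure X) [IsProbabilityMeasure μ] (hstat : μ.bind P = μ)
    (φ : X → ℝ) (hφm : Measurable φ) (hφb : ∃ C, ∀ x, |φ x| ≤ C)
    (hPcont : ∀ f : C(X, ℝ), Continuous fun x => ∫ y, f y ∂(P x))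
    (herg : ∀ A : Set X, MeasurableSet A →
      (Lop P (A.indicator fun _ => (1 : ℝ)) =ᵐ[μ] A.indicator fun _ => (1 : ℝ)) →
      μ A = 0 ∨ μ A = 1) :
    ∀ᵐ x ∂μ, Tendsto
      (fun n : ℕ => (∑ j ∈ Finset.range n, (Lop P)^[j] φ x) / (n : ℝ))
      atTop (nhds (∫ y, φ y ∂μ)) := by
  classical
  obtain ⟨C₀, hC₀⟩ := hφb
  set C := max C₀ 0 with hCdef
  have hC : (0:ℝ) ≤ C := le_max_right _ _
  have hfb : ∀ x, |φ x| ≤ C := fun x => (hC₀ x).trans (le_max_left _ _)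
  obtain ⟨c, hc, hcle⟩ := StmtAux.upper hPmeas hPprob hstat herg hC hφm hfb
  have hψm : Measurable fun x => -φ x := hφm.neg
  have hψb : ∀ x, |-φ x| ≤ C := fun x => by rw [abs_neg]; exact hfb x
  obtain ⟨d, hd, hdle⟩ := StmtAux.upper hPmeas hPprob hstat herg hC hψm hψb
  have hFFneg : ∀ x, StmtAux.FF P (fun y => -φ y) x = -StmtAux.GG P φ x :=
    StmtAux.FF_neg hPmeas hPprob hC hφm hfb
  have hGG : StmtAux.GG P φ =ᵐ[μ] fun _ => -d := by
    filter_upwards [hd] with x hx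
    have h2 := hFFneg x
    rw [hx] at h2
    linarith [h2]
  have hdle' : ∫ x, φ x ∂μ ≤ -d := by
    rw [integral_neg] at hdle
    linarith
  haveI : (Filter.NeBot (ae μ)) := ae_neBot.2 (IsProbabilityMeasure.ne_zero μ)
  obtain ⟨x₀, hx1, hx2⟩ := (hGG.and hc).exists
  have hGF := StmtAux.GG_le_FF hPmeas hPprob hC hφm hfb x₀
  rw [hx1, hx2] at hGF
  have hGF' : -d ≤ c := hGF
  have heq1 : c = ∫ y, φ y ∂μ := le_antisymm hcle (by linarith)
  have heq2 : -d = ∫ y, φ y ∂μ := le_antisymm (by linarith) (by linarith)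
  filter_upwards [hc, hGG] with x hxc hxG
  have htb := StmtAux.tendsto_bb hPmeas hPprob hC hφm hfb x
  have hth := StmtAux.tendsto_hh hPmeas hPprob hC hφm hfb x
  rw [hxG, heq2] at htb
  rw [hxc, heq1] at hth
  have hlow : ∀ n, StmtAux.bb P φ n x ≤ StmtAux.aa P φ n x := fun n => by
    have := ciInf_le (StmtAux.bddBelow_of_abs fun j =>
      StmtAux.aa_bound hPmeas hPprob hC hφm hfb (n+j) x) 0
    simp only [add_zero] at this; exact this
  have hhigh : ∀ n, StmtAux.aa P φ n x ≤ StmtAux.hh P φ n x := fun n => by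
    have := le_ciSup (StmtAux.bddAbove_of_abs fun j =>
      StmtAux.aa_bound hPmeas hPprob hC hφm hfb (n+j) x) 0
    simp only [add_zero] at this; exact this
  have haa : Tendsto (fun n => StmtAux.aa P φ n x) atTop (nhds (∫ y, φ y ∂μ)) :=
    tendsto_of_tendsto_of_tendsto_of_le_of_le htb hth hlow hhigh
  rw [← tendsto_add_atTop_iff_nat 1]
  apply haa.congr
  intro n
  rw [StmtAux.aa, StmtAux.S]
  push_cast
  rfl
end
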